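/- arXiv:1105.1196 — 9 statements merged into one kernel-verified Lean document; each statement's English description precedes it below -/
import Mathlib

section
/- Let p₂(x) = (1/4)·exp(−2|x|). For every Schwartz function u : ℝ → ℝ, one has ∫_ℝ u(x)² dx ≤ 4 ∫_ℝ (u(x) − u''(x)) · (p₂ * u)(x) dx. -/
open MeasureTheory Real

section Stmt2AuxSection
open Filter Set Topology

namespace Stmt2Aux

lemma intOn_Ioi (y a : ℝ) : IntegrableOn (fun x : ℝ => Real.exp (-2 * (x - y))) (Ioi a) := by
  have h : (fun x : ℝ => Real.exp (-2 * (x - y))) = fun x => Real.exp (2 * y) * Real.exp (-2 * x) := by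
    funext x; rw [← Real.exp_add]; ring_nf
  rw [h]
  exact (exp_neg_integrableOn_Ioi a two_pos).const_mul _

lemma intOn_Iic (y a : ℝ) : IntegrableOn (fun x : ℝ => Real.exp (2 * (x - y))) (Iic a) := by
  have key := (MeasurePreserving.integrableOn_comp_preimage
      (Measure.measurePreserving_neg (volume : Measure ℝ))
      (Homeomorph.neg ℝ).measurableEmbedding
      (f := fun x : ℝ => Real.exp (2 * (x - y))) (s := Iic a)).1
  have h1 : IntegrableOn ((fun x : ℝ => Real.exp (2 * (x - y))) ∘ (Neg.neg)) (Ici (-a)) := by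
    have : ((fun x : ℝ => Real.exp (2 * (x - y))) ∘ (Neg.neg)) =
        fun x : ℝ => Real.exp (-2 * (x - (-y))) := by
      funext x; simp [Function.comp]; ring_nf
    rw [this, integrableOn_Ici_iff_integrableOn_Ioi]
    exact intOn_Ioi (-y) (-a)
  have h2 : (Neg.neg : ℝ → ℝ) ⁻¹' (Iic a) = Ici (-a) := by
    ext x; simp [neg_le]
  rw [h2] at key; exact key h1

end Stmt2Aux

namespace Stmt2Aux
open SchwartzMap

noncomputable def D1 (f : 𝓢(ℝ, ℝ)) : 𝓢(ℝ, ℝ) := SchwartzMap.derivCLM ℝ ℝ f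

lemma D1_apply (f : 𝓢(ℝ, ℝ)) (x : ℝ) : D1 f x = deriv f x := rfl

lemma schwartz_tendsto_atTop (f : 𝓢(ℝ, ℝ)) : Tendsto f atTop (𝓝 0) := by
  have h : Tendsto f (Filter.cocompact ℝ) (𝓝 0) := by
    have := f.toZeroAtInfty.zero_at_infty'
    exact this
  refine h.mono_left ?_
  rw [cocompact_eq_atBot_atTop]
  exact le_sup_right

lemma schwartz_tendsto_atBot (f : 𝓢(ℝ, ℝ)) : Tendsto f atBot (𝓝 0) := by
  have h : Tendsto f (Filter.cocompact ℝ) (𝓝 0) := by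
    have := f.toZeroAtInfty.zero_at_infty'
    exact this
  refine h.mono_left ?_
  rw [cocompact_eq_atBot_atTop]
  exact le_sup_left

lemma schwartz_bound (f : 𝓢(ℝ, ℝ)) : ∃ C : ℝ, ∀ x, |f x| ≤ C := by
  refine ⟨‖f.toBoundedContinuousFunction‖, fun x => ?_⟩
  have := f.toBoundedContinuousFunction.norm_coe_le_norm x
  simpa using this

/-- FTC on Ioi: `∫_{y}^{∞} (f'' - 4 f) e^{-2(x-y)} = -(f' y + 2 f y)` -/
lemma ftc_Ioi (f : 𝓢(ℝ, ℝ)) (y : ℝ) :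
    ∫ x in Ioi y, (D1 (D1 f) x - 4 * f x) * Real.exp (-2 * (x - y)) = -(D1 f y + 2 * f y) := by
  have hderiv : ∀ x ∈ Ici y, HasDerivAt (fun x => (D1 f x + 2 * f x) * Real.exp (-2 * (x - y)))
      ((D1 (D1 f) x - 4 * f x) * Real.exp (-2 * (x - y))) x := by
    intro x _
    have h1 : HasDerivAt (fun x => D1 f x + 2 * f x) (D1 (D1 f) x + 2 * D1 f x) x := by
      have ha : HasDerivAt (D1 f) (D1 (D1 f) x) x := by
        simpa [D1_apply] using (D1 f).differentiableAt.hasDerivAt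
      have hb : HasDerivAt (f : ℝ → ℝ) (D1 f x) x := by
        simpa [D1_apply] using f.differentiableAt.hasDerivAt
      exact ha.add (hb.const_mul 2)
    have h2 : HasDerivAt (fun x : ℝ => Real.exp (-2 * (x - y))) (-2 * Real.exp (-2 * (x - y))) x := by
      have : HasDerivAt (fun x : ℝ => -2 * (x - y)) (-2) x := by
        simpa using ((hasDerivAt_id x).sub_const y).const_mul (-2)
      simpa [mul_comm] using this.exp
    have := h1.mul h2
    exact this.congr_deriv (by ring)
  have hint : IntegrableOn (fun x => (D1 (D1 f) x - 4 * f x) * Real.exp (-2 * (x - y))) (Ioi y) := by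
    obtain ⟨C, hC⟩ := schwartz_bound (D1 (D1 f) - (4 : ℝ) • f)
    refine Integrable.mono' (((intOn_Ioi y y).const_mul C)) ?_ ?_
    · exact (((D1 (D1 f)).continuous.sub (continuous_const.mul f.continuous)).mul
        (Real.continuous_exp.comp (continuous_const.mul (continuous_id.sub continuous_const)))).aestronglyMeasurable.restrict
    · filter_upwards with x
      have hx := hC x
      simp only [SchwartzMap.sub_apply, SchwartzMap.smul_apply, smul_eq_mul] at hx
      have he : (0:ℝ) ≤ Real.exp (-2 * (x - y)) := (Real.exp_pos _).le
      rw [norm_mul, Real.norm_eq_abs, Real.norm_eq_abs, abs_of_nonneg he]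
      exact mul_le_mul_of_nonneg_right hx he
  have htend : Tendsto (fun x => (D1 f x + 2 * f x) * Real.exp (-2 * (x - y))) atTop (𝓝 0) := by
    have h1 : Tendsto (fun x => D1 f x + 2 * f x) atTop (𝓝 0) := by
      simpa using (schwartz_tendsto_atTop (D1 f)).add ((schwartz_tendsto_atTop f).const_mul 2)
    have h2 : Tendsto (fun x : ℝ => Real.exp (-2 * (x - y))) atTop (𝓝 0) := by
      apply Real.tendsto_exp_atBot.comp
      exact Tendsto.const_mul_atTop_of_neg (by norm_num) (tendsto_atTop_add_const_right atTop (-y) tendsto_id |>.congr (fun x => by simp only [id_eq]; ring))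
    simpa using h1.mul h2
  have := integral_Ioi_of_hasDerivAt_of_tendsto' hderiv hint htend
  rw [this]
  simp
end Stmt2Aux

namespace Stmt2Aux
open SchwartzMap

lemma ftc_Iic (f : 𝓢(ℝ, ℝ)) (y : ℝ) :
    ∫ x in Iic y, (D1 (D1 f) x - 4 * f x) * Real.exp (2 * (x - y)) = D1 f y - 2 * f y := by
  have hderiv : ∀ x ∈ Iic y, HasDerivAt (fun x => (D1 f x - 2 * f x) * Real.exp (2 * (x - y)))
      ((D1 (D1 f) x - 4 * f x) * Real.exp (2 * (x - y))) x := by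
    intro x _
    have h1 : HasDerivAt (fun x => D1 f x - 2 * f x) (D1 (D1 f) x - 2 * D1 f x) x := by
      have ha : HasDerivAt (D1 f) (D1 (D1 f) x) x := by
        simpa [D1_apply] using (D1 f).differentiableAt.hasDerivAt
      have hb : HasDerivAt (f : ℝ → ℝ) (D1 f x) x := by
        simpa [D1_apply] using f.differentiableAt.hasDerivAt
      exact ha.sub (hb.const_mul 2)
    have h2 : HasDerivAt (fun x : ℝ => Real.exp (2 * (x - y))) (2 * Real.exp (2 * (x - y))) x := by
      have : HasDerivAt (fun x : ℝ => 2 * (x - y)) (2) x := by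
        simpa using ((hasDerivAt_id x).sub_const y).const_mul (2)
      simpa [mul_comm] using this.exp
    have := h1.mul h2
    exact this.congr_deriv (by ring)
  have hint : IntegrableOn (fun x => (D1 (D1 f) x - 4 * f x) * Real.exp (2 * (x - y))) (Iic y) := by
    obtain ⟨C, hC⟩ := schwartz_bound (D1 (D1 f) - (4 : ℝ) • f)
    refine Integrable.mono' (((intOn_Iic y y).const_mul C)) ?_ ?_
    · exact (((D1 (D1 f)).continuous.sub (continuous_const.mul f.continuous)).mul
        (Real.continuous_exp.comp (continuous_const.mul (continuous_id.sub continuous_const)))).aestronglyMeasurable.restrict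
    · filter_upwards with x
      have hx := hC x
      simp only [SchwartzMap.sub_apply, SchwartzMap.smul_apply, smul_eq_mul] at hx
      have he : (0:ℝ) ≤ Real.exp (2 * (x - y)) := (Real.exp_pos _).le
      rw [norm_mul, Real.norm_eq_abs, Real.norm_eq_abs, abs_of_nonneg he]
      exact mul_le_mul_of_nonneg_right hx he
  have htend : Tendsto (fun x => (D1 f x - 2 * f x) * Real.exp (2 * (x - y))) atBot (𝓝 0) := by
    have h1 : Tendsto (fun x => D1 f x - 2 * f x) atBot (𝓝 0) := by
      simpa using (schwartz_tendsto_atBot (D1 f)).sub ((schwartz_tendsto_atBot f).const_mul 2)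
    have h2 : Tendsto (fun x : ℝ => Real.exp (2 * (x - y))) atBot (𝓝 0) := by
      apply Real.tendsto_exp_atBot.comp
      exact Tendsto.const_mul_atBot (by norm_num) (tendsto_atBot_add_const_right atBot (-y) tendsto_id |>.congr (fun x => by simp only [id_eq]; ring))
    simpa using h1.mul h2
  have := integral_Iic_of_hasDerivAt_of_tendsto' hderiv hint htend
  rw [this]
  simp

/-- The global key identity: `∫ (f'' - 4 f)(x) e^{-2|x-y|} dx = -4 f y`. -/
lemma key_identity (f : 𝓢(ℝ, ℝ)) (y : ℝ) :
    ∫ x, (D1 (D1 f) x - 4 * f x) * Real.exp (-2 * |x - y|) = -4 * f y := by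
  have hIic : ∫ x in Iic y, (D1 (D1 f) x - 4 * f x) * Real.exp (-2 * |x - y|)
      = D1 f y - 2 * f y := by
    rw [setIntegral_congr_fun measurableSet_Iic (g := fun x => (D1 (D1 f) x - 4 * f x) * Real.exp (2 * (x - y)))]
    · exact ftc_Iic f y
    · intro x hx
      have : |x - y| = -(x - y) := abs_of_nonpos (by simp at hx; linarith)
      simp only [this]; ring_nf
  have hIoi : ∫ x in Ioi y, (D1 (D1 f) x - 4 * f x) * Real.exp (-2 * |x - y|)
      = -(D1 f y + 2 * f y) := by
    rw [setIntegral_congr_fun measurableSet_Ioi (g := fun x => (D1 (D1 f) x - 4 * f x) * Real.exp (-2 * (x - y)))]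
    · exact ftc_Ioi f y
    · intro x hx
      have : |x - y| = x - y := abs_of_nonneg (by simp at hx; linarith)
      simp only [this]
  have hInt : Integrable (fun x => (D1 (D1 f) x - 4 * f x) * Real.exp (-2 * |x - y|)) := by
    obtain ⟨C, hC⟩ := schwartz_bound (D1 (D1 f) - (4 : ℝ) • f)
    refine Integrable.mono' ((D1 (D1 f)).integrable.sub (f.integrable.const_mul 4)).norm ?_ ?_
    · exact (((D1 (D1 f)).continuous.sub (continuous_const.mul f.continuous)).mul
        (Real.continuous_exp.comp (continuous_const.mul (continuous_id.sub continuous_const).abs))).aestronglyMeasurable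
    · filter_upwards with x
      have he : Real.exp (-2 * |x - y|) ≤ 1 := Real.exp_le_one_iff.mpr (by
        have := abs_nonneg (x - y); nlinarith)
      have he0 : (0:ℝ) ≤ Real.exp (-2 * |x - y|) := (Real.exp_pos _).le
      rw [norm_mul]
      calc ‖D1 (D1 f) x - 4 * f x‖ * ‖Real.exp (-2 * |x - y|)‖
          ≤ ‖D1 (D1 f) x - 4 * f x‖ * 1 := by
            apply mul_le_mul_of_nonneg_left _ (norm_nonneg _)
            rw [Real.norm_eq_abs, abs_of_nonneg he0]; exact he
        _ = ‖D1 (D1 f) x - 4 * f x‖ := mul_one _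
        _ = ‖(⇑(D1 (D1 f)) - fun x => 4 * f x) x‖ := by simp [Pi.sub_apply]
  rw [← intervalIntegral.integral_Iic_add_Ioi hInt.integrableOn hInt.integrableOn, hIic, hIoi]
  ring

end Stmt2Aux

namespace Stmt2Aux

lemma expker_integrable (y : ℝ) : Integrable (fun x : ℝ => Real.exp (-2 * |x - y|)) := by
  rw [← integrableOn_univ, ← Set.Iic_union_Ioi (a := y)]
  apply IntegrableOn.union
  · refine (intOn_Iic y y).congr_fun (fun x hx => ?_) measurableSet_Iic
    have : |x - y| = -(x - y) := abs_of_nonpos (by simp at hx; linarith)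
    rw [this]; ring_nf
  · refine (intOn_Ioi y y).congr_fun (fun x hx => ?_) measurableSet_Ioi
    have : |x - y| = x - y := abs_of_nonneg (by simp at hx; linarith)
    rw [this]

lemma int_Ioi_exp (y : ℝ) : ∫ x in Ioi y, Real.exp (-2 * (x - y)) = 1 / 2 := by
  have hderiv : ∀ x ∈ Ici y, HasDerivAt (fun x : ℝ => -(1/2) * Real.exp (-2 * (x - y)))
      (Real.exp (-2 * (x - y))) x := by
    intro x _
    have h2 : HasDerivAt (fun x : ℝ => Real.exp (-2 * (x - y))) (-2 * Real.exp (-2 * (x - y))) x := by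
      have : HasDerivAt (fun x : ℝ => -2 * (x - y)) (-2) x := by
        simpa using ((hasDerivAt_id x).sub_const y).const_mul (-2)
      simpa [mul_comm] using this.exp
    exact (h2.const_mul (-(1/2 : ℝ))).congr_deriv (by ring)
  have htend : Tendsto (fun x : ℝ => -(1/2) * Real.exp (-2 * (x - y))) atTop (𝓝 0) := by
    have h2 : Tendsto (fun x : ℝ => Real.exp (-2 * (x - y))) atTop (𝓝 0) := by
      apply Real.tendsto_exp_atBot.comp
      exact Tendsto.const_mul_atTop_of_neg (by norm_num) (tendsto_atTop_add_const_right atTop (-y) tendsto_id |>.congr (fun x => by simp only [id_eq]; ring))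
    simpa using h2.const_mul (-(1/2 : ℝ))
  have := integral_Ioi_of_hasDerivAt_of_tendsto' hderiv (intOn_Ioi y y) htend
  rw [this]; simp

lemma int_Iic_exp (y : ℝ) : ∫ x in Iic y, Real.exp (2 * (x - y)) = 1 / 2 := by
  have hderiv : ∀ x ∈ Iic y, HasDerivAt (fun x : ℝ => (1/2) * Real.exp (2 * (x - y)))
      (Real.exp (2 * (x - y))) x := by
    intro x _
    have h2 : HasDerivAt (fun x : ℝ => Real.exp (2 * (x - y))) (2 * Real.exp (2 * (x - y))) x := by
      have : HasDerivAt (fun x : ℝ => 2 * (x - y)) (2) x := by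
        simpa using ((hasDerivAt_id x).sub_const y).const_mul (2)
      simpa [mul_comm] using this.exp
    exact (h2.const_mul ((1/2 : ℝ))).congr_deriv (by ring)
  have htend : Tendsto (fun x : ℝ => (1/2) * Real.exp (2 * (x - y))) atBot (𝓝 0) := by
    have h2 : Tendsto (fun x : ℝ => Real.exp (2 * (x - y))) atBot (𝓝 0) := by
      apply Real.tendsto_exp_atBot.comp
      exact Tendsto.const_mul_atBot (by norm_num) (tendsto_atBot_add_const_right atBot (-y) tendsto_id |>.congr (fun x => by simp only [id_eq]; ring))
    simpa using h2.const_mul ((1/2 : ℝ))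
  have := integral_Iic_of_hasDerivAt_of_tendsto' hderiv (intOn_Iic y y) htend
  rw [this]; simp

lemma expker_integral (y : ℝ) : ∫ x, Real.exp (-2 * |x - y|) = 1 := by
  rw [← intervalIntegral.integral_Iic_add_Ioi (expker_integrable y).integrableOn
    (expker_integrable y).integrableOn]
  have h1 : ∫ x in Iic y, Real.exp (-2 * |x - y|) = 1 / 2 := by
    rw [setIntegral_congr_fun measurableSet_Iic (g := fun x : ℝ => Real.exp (2 * (x - y)))]
    · exact int_Iic_exp y
    · intro x hx
      have : |x - y| = -(x - y) := abs_of_nonpos (by simp at hx; linarith)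
      simp only [this]; ring_nf
  have h2 : ∫ x in Ioi y, Real.exp (-2 * |x - y|) = 1 / 2 := by
    rw [setIntegral_congr_fun measurableSet_Ioi (g := fun x : ℝ => Real.exp (-2 * (x - y)))]
    · exact int_Ioi_exp y
    · intro x hx
      have : |x - y| = x - y := abs_of_nonneg (by simp at hx; linarith)
      simp only [this]
  rw [h1, h2]; norm_num

lemma expker_integral' (x : ℝ) : ∫ y, Real.exp (-2 * |x - y|) = 1 := by
  have := expker_integral x
  rw [← this]
  congr 1; funext t; rw [abs_sub_comm]

lemma expker_integrable' (x : ℝ) : Integrable (fun y : ℝ => Real.exp (-2 * |x - y|)) := by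
  have := expker_integrable x
  have h : (fun y : ℝ => Real.exp (-2 * |x - y|)) = fun y : ℝ => Real.exp (-2 * |y - x|) := by
    funext t; rw [abs_sub_comm]
  rw [h]; exact expker_integrable x

end Stmt2Aux

namespace Stmt2Aux
open SchwartzMap

lemma ker_cont : Continuous (fun p : ℝ × ℝ => Real.exp (-2 * |p.1 - p.2|)) :=
  Real.continuous_exp.comp (continuous_const.mul (continuous_fst.sub continuous_snd).abs)

lemma ker_le_one (p : ℝ × ℝ) : Real.exp (-2 * |p.1 - p.2|) ≤ 1 :=
  Real.exp_le_one_iff.mpr (by have := abs_nonneg (p.1 - p.2); nlinarith)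

lemma prod_integrable (g h : 𝓢(ℝ, ℝ)) :
    Integrable (fun p : ℝ × ℝ => g p.1 * (Real.exp (-2 * |p.1 - p.2|) * h p.2))
      (volume.prod volume) := by
  refine Integrable.mono' (g.integrable.norm.mul_prod h.integrable.norm) ?_ ?_
  · exact ((g.continuous.comp continuous_fst).mul
      (ker_cont.mul (h.continuous.comp continuous_snd))).aestronglyMeasurable
  · filter_upwards with p
    have he0 : (0:ℝ) ≤ Real.exp (-2 * |p.1 - p.2|) := (Real.exp_pos _).le
    have he1 := ker_le_one p
    rw [norm_mul, norm_mul]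
    calc ‖g p.1‖ * (‖Real.exp (-2 * |p.1 - p.2|)‖ * ‖h p.2‖)
        ≤ ‖g p.1‖ * (1 * ‖h p.2‖) := by
          apply mul_le_mul_of_nonneg_left _ (norm_nonneg _)
          apply mul_le_mul_of_nonneg_right _ (norm_nonneg _)
          rw [Real.norm_eq_abs, abs_of_nonneg he0]; exact he1
      _ = ‖g p.1‖ * ‖h p.2‖ := by ring

lemma fubini_swap (g h : 𝓢(ℝ, ℝ)) :
    ∫ x, g x * ∫ y, Real.exp (-2 * |x - y|) * h y
      = ∫ y, h y * ∫ x, g x * Real.exp (-2 * |x - y|) := by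
  have hint : Integrable (Function.uncurry fun x y => g x * (Real.exp (-2 * |x - y|) * h y))
      (volume.prod volume) := prod_integrable g h
  calc ∫ x, g x * ∫ y, Real.exp (-2 * |x - y|) * h y
      = ∫ x, ∫ y, g x * (Real.exp (-2 * |x - y|) * h y) := by
        congr 1; funext x; rw [integral_const_mul]
    _ = ∫ y, ∫ x, g x * (Real.exp (-2 * |x - y|) * h y) := integral_integral_swap hint
    _ = ∫ y, h y * ∫ x, g x * Real.exp (-2 * |x - y|) := by
        congr 1; funext y
        rw [mul_comm, ← integral_mul_const]
        congr 1; funext x; ring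

lemma mul_expker_integrable {g : ℝ → ℝ} (hg : Continuous g) {C : ℝ} (hC : ∀ x, |g x| ≤ C)
    (y : ℝ) : Integrable (fun x => g x * Real.exp (-2 * |x - y|)) := by
  refine Integrable.mono' ((expker_integrable y).const_mul C) ?_ ?_
  · exact (hg.mul (Real.continuous_exp.comp
      (continuous_const.mul (continuous_id.sub continuous_const).abs))).aestronglyMeasurable
  · filter_upwards with x
    have he0 : (0:ℝ) ≤ Real.exp (-2 * |x - y|) := (Real.exp_pos _).le
    rw [norm_mul, Real.norm_eq_abs (Real.exp _), abs_of_nonneg he0]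
    exact mul_le_mul_of_nonneg_right (hC x) he0

lemma inner_identity (u : 𝓢(ℝ, ℝ)) (y : ℝ) :
    ∫ x, (u x - D1 (D1 u) x) * Real.exp (-2 * |x - y|)
      = 4 * u y - 3 * ∫ x, u x * Real.exp (-2 * |x - y|) := by
  obtain ⟨C2, hC2⟩ := schwartz_bound (D1 (D1 u) - (4 : ℝ) • u)
  obtain ⟨C1, hC1⟩ := schwartz_bound u
  have hC2' : ∀ x, |D1 (D1 u) x - 4 * u x| ≤ C2 := by
    intro x; have := hC2 x
    simpa [SchwartzMap.sub_apply, SchwartzMap.smul_apply, smul_eq_mul] using this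
  have Ia : Integrable (fun x => (D1 (D1 u) x - 4 * u x) * Real.exp (-2 * |x - y|)) :=
    mul_expker_integrable ((D1 (D1 u)).continuous.sub (continuous_const.mul u.continuous)) hC2' y
  have Ib : Integrable (fun x => u x * Real.exp (-2 * |x - y|)) :=
    mul_expker_integrable u.continuous hC1 y
  have split : (fun x => (u x - D1 (D1 u) x) * Real.exp (-2 * |x - y|))
      = fun x => (-1 : ℝ) * ((D1 (D1 u) x - 4 * u x) * Real.exp (-2 * |x - y|))
        + (-3 : ℝ) * (u x * Real.exp (-2 * |x - y|)) := by
    funext x; ring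
  rw [split, integral_add (Ia.const_mul _) (Ib.const_mul _), integral_const_mul,
    integral_const_mul, key_identity u y]
  ring

end Stmt2Aux

namespace Stmt2Aux
open SchwartzMap

noncomputable def W (u : 𝓢(ℝ, ℝ)) (x : ℝ) : ℝ := ∫ y, Real.exp (-2 * |x - y|) * u y

lemma uW_integrable (u : 𝓢(ℝ, ℝ)) : Integrable (fun x => u x * W u x) := by
  have := (prod_integrable u u).integral_prod_left
  refine this.congr (Eventually.of_forall fun x => ?_)
  simp only [W]; rw [← integral_const_mul]

lemma uu_integrable (u : 𝓢(ℝ, ℝ)) : Integrable (fun x => u x * u x) := by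
  obtain ⟨C, hC⟩ := schwartz_bound u
  exact u.integrable.bdd_mul u.continuous.aestronglyMeasurable (c := C) (Eventually.of_forall fun x => by
    rw [Real.norm_eq_abs]; exact hC x)

lemma main_identity (u : 𝓢(ℝ, ℝ)) :
    ∫ x, (u x - D1 (D1 u) x) * W u x
      = 4 * (∫ x, u x * u x) - 3 * ∫ x, u x * W u x := by
  set g : 𝓢(ℝ, ℝ) := u - D1 (D1 u) with hg
  have hgcoe : ∀ x, g x = u x - D1 (D1 u) x := fun x => rfl
  have step1 : ∫ x, (u x - D1 (D1 u) x) * W u x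
      = ∫ y, u y * ∫ x, g x * Real.exp (-2 * |x - y|) := by
    rw [← fubini_swap g u]
    rfl
  have step2 : ∀ y, (∫ x, g x * Real.exp (-2 * |x - y|)) = 4 * u y - 3 * W u y := by
    intro y
    have h1 : (∫ x, g x * Real.exp (-2 * |x - y|))
        = ∫ x, (u x - D1 (D1 u) x) * Real.exp (-2 * |x - y|) := by
      congr 1
    have h2 : (∫ x, u x * Real.exp (-2 * |x - y|)) = W u y := by
      simp only [W]; congr 1; funext x; rw [mul_comm, abs_sub_comm]
    rw [h1, inner_identity u y, h2]
  rw [step1]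
  have step3 : (fun y => u y * (4 * u y - 3 * W u y))
      = fun y => (4 : ℝ) * (u y * u y) + (-3 : ℝ) * (u y * W u y) := by
    funext y; ring
  calc ∫ y, u y * ∫ x, g x * Real.exp (-2 * |x - y|)
      = ∫ y, u y * (4 * u y - 3 * W u y) := by
        congr 1; funext y; rw [step2]
    _ = ∫ y, ((4 : ℝ) * (u y * u y) + (-3 : ℝ) * (u y * W u y)) := by rw [step3]
    _ = 4 * (∫ x, u x * u x) - 3 * ∫ x, u x * W u x := by
        rw [integral_add ((uu_integrable u).const_mul _) ((uW_integrable u).const_mul _),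
          integral_const_mul, integral_const_mul]
        ring

end Stmt2Aux

namespace Stmt2Aux
open SchwartzMap

lemma psi1_integrable (u : 𝓢(ℝ, ℝ)) :
    Integrable (fun p : ℝ × ℝ => (1/2) * (u p.1 * u p.1) * Real.exp (-2 * |p.1 - p.2|))
      (volume.prod volume) := by
  have hmeas : AEStronglyMeasurable
      (fun p : ℝ × ℝ => (1/2) * (u p.1 * u p.1) * Real.exp (-2 * |p.1 - p.2|))
      (volume.prod volume) := by
    exact ((continuous_const.mul ((u.continuous.comp continuous_fst).mul
      (u.continuous.comp continuous_fst))).mul ker_cont).aestronglyMeasurable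
  rw [integrable_prod_iff hmeas]
  constructor
  · filter_upwards with x
    exact (expker_integrable' x).const_mul _
  · have heq : (fun x => ∫ y, ‖(1/2) * (u x * u x) * Real.exp (-2 * |x - y|)‖)
        = fun x => (1/2) * (u x * u x) := by
      funext x
      have hc : (0:ℝ) ≤ (1/2) * (u x * u x) := by nlinarith [mul_self_nonneg (u x)]
      have : (fun y => ‖(1/2) * (u x * u x) * Real.exp (-2 * |x - y|)‖)
          = fun y => (1/2) * (u x * u x) * Real.exp (-2 * |x - y|) := by
        funext y
        rw [Real.norm_eq_abs, abs_of_nonneg (mul_nonneg hc (Real.exp_pos _).le)]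
      rw [this, integral_const_mul, expker_integral' x, mul_one]
    rw [show (fun x => ∫ (y : ℝ), ‖1 / 2 * (u (x, y).1 * u (x, y).1) * rexp (-2 * |(x, y).1 - (x, y).2|)‖)
        = (fun x => ∫ y, ‖(1/2) * (u x * u x) * Real.exp (-2 * |x - y|)‖) from rfl, heq]
    exact (uu_integrable u).const_mul _

end Stmt2Aux

namespace Stmt2Aux
open SchwartzMap

lemma psi2_integrable (u : 𝓢(ℝ, ℝ)) :
    Integrable (fun p : ℝ × ℝ => (1/2) * (u p.2 * u p.2) * Real.exp (-2 * |p.1 - p.2|))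
      (volume.prod volume) := by
  have := (psi1_integrable u).swap
  refine this.congr (Eventually.of_forall fun p => ?_)
  show (1/2) * (u p.swap.1 * u p.swap.1) * Real.exp (-2 * |p.swap.1 - p.swap.2|)
      = (1/2) * (u p.2 * u p.2) * Real.exp (-2 * |p.1 - p.2|)
  simp only [Prod.fst_swap, Prod.snd_swap]
  rw [abs_sub_comm]

lemma psi1_integral (u : 𝓢(ℝ, ℝ)) :
    ∫ p : ℝ × ℝ, (1/2) * (u p.1 * u p.1) * Real.exp (-2 * |p.1 - p.2|) ∂(volume.prod volume)
      = (1/2) * ∫ x, u x * u x := by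
  have h : Integrable (Function.uncurry fun x y =>
      (1/2) * (u x * u x) * Real.exp (-2 * |x - y|)) (volume.prod volume) := psi1_integrable u
  rw [← integral_integral h]
  have : (fun x => ∫ y, (1/2) * (u x * u x) * Real.exp (-2 * |x - y|))
      = fun x => (1/2) * (u x * u x) := by
    funext x
    rw [integral_const_mul, expker_integral' x, mul_one]
  rw [this, integral_const_mul]

lemma psi2_integral (u : 𝓢(ℝ, ℝ)) :
    ∫ p : ℝ × ℝ, (1/2) * (u p.2 * u p.2) * Real.exp (-2 * |p.1 - p.2|) ∂(volume.prod volume)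
      = (1/2) * ∫ x, u x * u x := by
  rw [← psi1_integral u, ← integral_prod_swap]
  congr 1; funext p
  simp only [Prod.fst_swap, Prod.snd_swap]
  rw [abs_sub_comm]

lemma uW_le (u : 𝓢(ℝ, ℝ)) : ∫ x, u x * W u x ≤ ∫ x, u x * u x := by
  have hΦ : Integrable (fun p : ℝ × ℝ => u p.1 * (Real.exp (-2 * |p.1 - p.2|) * u p.2))
      (volume.prod volume) := prod_integrable u u
  have hrw : ∫ x, u x * W u x
      = ∫ p : ℝ × ℝ, u p.1 * (Real.exp (-2 * |p.1 - p.2|) * u p.2) ∂(volume.prod volume) := by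
    have h : Integrable (Function.uncurry fun x y =>
        u x * (Real.exp (-2 * |x - y|) * u y)) (volume.prod volume) := hΦ
    rw [← integral_integral h]
    congr 1; funext x
    simp only [W]; rw [← integral_const_mul]
  have hmono : ∫ p : ℝ × ℝ, u p.1 * (Real.exp (-2 * |p.1 - p.2|) * u p.2) ∂(volume.prod volume)
      ≤ ∫ p : ℝ × ℝ, ((1/2) * (u p.1 * u p.1) * Real.exp (-2 * |p.1 - p.2|)
        + (1/2) * (u p.2 * u p.2) * Real.exp (-2 * |p.1 - p.2|)) ∂(volume.prod volume) := by
    refine integral_mono hΦ ((psi1_integrable u).add (psi2_integrable u)) fun p => ?_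
    have he0 : (0:ℝ) ≤ Real.exp (-2 * |p.1 - p.2|) := (Real.exp_pos _).le
    nlinarith [mul_nonneg he0 (sq_nonneg (u p.1 - u p.2))]
  rw [hrw]
  refine hmono.trans ?_
  rw [integral_add (psi1_integrable u) (psi2_integrable u), psi1_integral, psi2_integral]
  linarith

end Stmt2Aux

end Stmt2AuxSection

/-- Via Plancherel, the Fourier multiplier `(1 + ξ²)/(4 + ξ²)` is bounded below
by `1/4`: for a Schwartz function `u`, with `m = u - u''` and `w = p₂ * u`
(where `p₂(x) = (1/4)·exp(−2|x|)`), one has `∫ u² ≤ 4 ∫ m w`. -/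
theorem stmt_2 (u : SchwartzMap ℝ ℝ)
    (p₂ : ℝ → ℝ) (hp : ∀ x, p₂ x = (1 / 4) * Real.exp (-2 * |x|))
    (w : ℝ → ℝ) (hw : ∀ x, w x = ∫ y, p₂ (x - y) * u y) :
    ∫ x, (u x) ^ 2 ≤ 4 * ∫ x, (u x - deriv (deriv (u : ℝ → ℝ)) x) * w x := by
  have hw' : ∀ x, w x = (1/4) * Stmt2Aux.W u x := by
    intro x; rw [hw]
    simp only [Stmt2Aux.W]
    rw [← integral_const_mul]
    congr 1; funext y; rw [hp]; ring
  have hcoe : (⇑(Stmt2Aux.D1 u) : ℝ → ℝ) = deriv ⇑u := funext fun x => Stmt2Aux.D1_apply u x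
  have hdd : ∀ x, deriv (deriv (⇑u)) x = Stmt2Aux.D1 (Stmt2Aux.D1 u) x := by
    intro x; rw [Stmt2Aux.D1_apply, hcoe]
  have h1 : ∫ x, (u x - deriv (deriv (⇑u)) x) * w x
      = (1/4) * ∫ x, (u x - Stmt2Aux.D1 (Stmt2Aux.D1 u) x) * Stmt2Aux.W u x := by
    rw [← integral_const_mul]; congr 1; funext x; rw [hw' x, hdd x]; ring
  have h2 := Stmt2Aux.main_identity u
  have h3 := Stmt2Aux.uW_le u
  have hsq : ∫ x, (u x)^2 = ∫ x, u x * u x := by congr 1; funext x; ring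
  rw [hsq, h1, h2]
  linarith
end

section
/- Let p₂(x) = (1/4)·exp(−2|x|). For every Schwartz function u : ℝ → ℝ, setting m = u − u'' and w = p₂ * u, one has ∫_ℝ w(x) · (m·u)'(x) dx = ∫_ℝ w'(x) u(x)² dx − ∫_ℝ w'(x) (u'(x))² dx. -/
open MeasureTheory Real

open MeasureTheory Real Filter Set intervalIntegral

namespace Stmt4Aux

variable (u : SchwartzMap ℝ ℝ)

lemma bound (g : SchwartzMap ℝ ℝ) : ∃ C, ∀ x, |g x| ≤ C := by
  obtain ⟨C, -, hC⟩ := g.decay 0 0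
  exact ⟨C, fun x => by simpa using hC x⟩

lemma intA (x : ℝ) : IntegrableOn (fun y => rexp (2*y) * u y) (Iic x) := by
  refine Integrable.mono ((u.integrable.const_mul (rexp (2*x))).restrict)
    ((((continuous_const.mul continuous_id).rexp).mul u.continuous).aestronglyMeasurable) ?_
  refine (ae_restrict_iff' measurableSet_Iic).2 (Eventually.of_forall fun y hy => ?_)
  simp only [norm_mul, Real.norm_eq_abs, abs_exp]
  have : rexp (2*y) ≤ rexp (2*x) := exp_le_exp.2 (by have := Set.mem_Iic.1 hy; linarith)
  exact mul_le_mul_of_nonneg_right this (abs_nonneg _)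

lemma intB (x : ℝ) : IntegrableOn (fun y => rexp (-(2*y)) * u y) (Ici x) := by
  refine Integrable.mono ((u.integrable.const_mul (rexp (-(2*x)))).restrict)
    ((((continuous_const.mul continuous_id).neg.rexp).mul u.continuous).aestronglyMeasurable) ?_
  refine (ae_restrict_iff' measurableSet_Ici).2 (Eventually.of_forall fun y hy => ?_)
  simp only [norm_mul, Real.norm_eq_abs, abs_exp]
  have : rexp (-(2*y)) ≤ rexp (-(2*x)) := exp_le_exp.2 (by have := Set.mem_Ici.1 hy; linarith)
  exact mul_le_mul_of_nonneg_right this (abs_nonneg _)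

noncomputable def A (x : ℝ) : ℝ := ∫ y in Iic x, rexp (2*y) * u y
noncomputable def B (x : ℝ) : ℝ := ∫ y in Ioi x, rexp (-(2*y)) * u y

lemma hasDerivAt_A (x : ℝ) : HasDerivAt (A u) (rexp (2*x) * u x) x := by
  have hcont : Continuous (fun y => rexp (2*y) * u y) :=
    ((continuous_const.mul continuous_id).rexp).mul u.continuous
  have key : ∀ z, A u z = A u 0 + ∫ t in (0:ℝ)..z, rexp (2*t) * u t := by
    intro z
    have := integral_Iic_sub_Iic (intA u 0) (intA u z)
    simp only [A]; linarith
  have H : HasDerivAt (fun z => A u 0 + ∫ t in (0:ℝ)..z, rexp (2*t) * u t)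
      (rexp (2*x) * u x) x := by
    refine HasDerivAt.const_add _ ?_
    refine integral_hasDerivAt_right ?_ (hcont.stronglyMeasurableAtFilter _ _) hcont.continuousAt
    exact ((intA u (max 0 x)).mono_set (by rw [Set.uIcc]; exact Icc_subset_Iic_self)).intervalIntegrable
  exact H.congr_of_eventuallyEq (Eventually.of_forall key)

lemma B_split {a b : ℝ} (hab : a ≤ b) :
    B u a = (∫ t in a..b, rexp (-(2*t)) * u t) + B u b := by
  rw [intervalIntegral.integral_of_le hab]
  rw [B, B, ← setIntegral_union (Ioc_disjoint_Ioi le_rfl) measurableSet_Ioi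
    (((intB u a).mono_set (fun y hy => hy.1.le))) ((intB u b).mono_set Ioi_subset_Ici_self),
    Ioc_union_Ioi_eq_Ioi hab]

lemma hasDerivAt_B (x : ℝ) : HasDerivAt (B u) (-(rexp (-(2*x)) * u x)) x := by
  have hcont : Continuous (fun y => rexp (-(2*y)) * u y) :=
    ((continuous_const.mul continuous_id).neg.rexp).mul u.continuous
  have key : ∀ z, B u z = B u 0 - ∫ t in (0:ℝ)..z, rexp (-(2*t)) * u t := by
    intro z
    rcases le_total 0 z with h | h
    · have := B_split u h; linarith
    · have := B_split u h
      rw [intervalIntegral.integral_symm] at this; linarith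
  have H : HasDerivAt (fun z => B u 0 - ∫ t in (0:ℝ)..z, rexp (-(2*t)) * u t)
      (-(rexp (-(2*x)) * u x)) x := by
    refine HasDerivAt.const_sub _ ?_
    refine integral_hasDerivAt_right ?_ (hcont.stronglyMeasurableAtFilter _ _) hcont.continuousAt
    exact ((intB u (min 0 x)).mono_set (by rw [Set.uIcc]; exact Icc_subset_Ici_self)).intervalIntegrable
  exact H.congr_of_eventuallyEq (Eventually.of_forall key)


lemma w_eq (p₂ : ℝ → ℝ) (hp : ∀ x, p₂ x = (1 / 4) * Real.exp (-2 * |x|))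
    (w : ℝ → ℝ) (hw : ∀ x, w x = ∫ y, p₂ (x - y) * u y) (x : ℝ) :
    w x = (1/4) * (rexp (-(2*x)) * A u x + rexp (2*x) * B u x) := by
  have hker_cont : Continuous fun y => p₂ (x - y) := by
    have : (fun y => p₂ (x - y)) = fun y => (1/4) * rexp (-2 * |x - y|) :=
      funext fun y => hp _
    rw [this]
    exact continuous_const.mul ((continuous_const.mul (continuous_const.sub continuous_id).abs).rexp)
  have hint : Integrable (fun y => p₂ (x - y) * u y) := by
    refine u.integrable.bdd_mul (c := 1/4) hker_cont.aestronglyMeasurable (Eventually.of_forall fun y => ?_)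
    rw [Real.norm_eq_abs, hp, abs_mul]
    have h1 : rexp (-2 * |x - y|) ≤ 1 := exp_le_one_iff.2 (by nlinarith [abs_nonneg (x - y)])
    have h2 : (0:ℝ) < rexp (-2 * |x - y|) := exp_pos _
    rw [abs_of_pos h2, abs_of_pos (by norm_num : (0:ℝ) < 1/4)]
    nlinarith
  rw [hw, ← integral_Iic_add_Ioi (b := x) hint.integrableOn hint.integrableOn]
  have h1 : ∫ y in Iic x, p₂ (x - y) * u y
      = ∫ y in Iic x, ((1/4) * rexp (-(2*x))) * (rexp (2*y) * u y) := by
    refine setIntegral_congr_fun measurableSet_Iic fun y hy => ?_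
    rw [hp, abs_of_nonneg (by have := Set.mem_Iic.1 hy; linarith : (0:ℝ) ≤ x - y),
      show (-2:ℝ) * (x - y) = -(2*x) + 2*y by ring, exp_add]
    ring
  have h2 : ∫ y in Ioi x, p₂ (x - y) * u y
      = ∫ y in Ioi x, ((1/4) * rexp (2*x)) * (rexp (-(2*y)) * u y) := by
    refine setIntegral_congr_fun measurableSet_Ioi fun y hy => ?_
    rw [hp, abs_of_nonpos (by have := Set.mem_Ioi.1 hy; linarith : x - y ≤ (0:ℝ)),
      show (-2:ℝ) * -(x - y) = 2*x + -(2*y) by ring, exp_add]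
    ring
  rw [h1, h2, MeasureTheory.integral_const_mul, MeasureTheory.integral_const_mul]
  show _ = (1/4) * (rexp (-(2*x)) * A u x + rexp (2*x) * B u x)
  rw [A, B]; ring

lemma A_bound (x : ℝ) : |A u x| ≤ rexp (2*x) * ∫ y, |u y| := by
  have h1 : |A u x| ≤ ∫ y in Iic x, rexp (2*y) * |u y| := by
    unfold A
    simpa [Real.norm_eq_abs, abs_mul, abs_exp] using
      MeasureTheory.norm_integral_le_integral_norm (μ := volume.restrict (Iic x))
      (f := fun y => rexp (2*y) * u y)
  refine h1.trans ?_
  have h2 : ∫ y in Iic x, rexp (2*y) * |u y| ≤ ∫ y in Iic x, rexp (2*x) * |u y| := by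
    refine setIntegral_mono_on
      ((intA u x).abs.congr (Eventually.of_forall fun y => by simp [abs_mul, abs_exp]))
      ((u.integrable.abs.const_mul (rexp (2*x))).restrict) measurableSet_Iic fun y hy => ?_
    exact mul_le_mul_of_nonneg_right (exp_le_exp.2 (by have := Set.mem_Iic.1 hy; linarith))
      (abs_nonneg _)
  refine h2.trans ?_
  rw [MeasureTheory.integral_const_mul]
  refine mul_le_mul_of_nonneg_left ?_ (exp_nonneg _)
  exact setIntegral_le_integral u.integrable.abs (Eventually.of_forall fun y => abs_nonneg _)

lemma B_bound (x : ℝ) : |B u x| ≤ rexp (-(2*x)) * ∫ y, |u y| := by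
  have h1 : |B u x| ≤ ∫ y in Ioi x, rexp (-(2*y)) * |u y| := by
    unfold B
    simpa [Real.norm_eq_abs, abs_mul, abs_exp] using
      MeasureTheory.norm_integral_le_integral_norm (μ := volume.restrict (Ioi x))
      (f := fun y => rexp (-(2*y)) * u y)
  refine h1.trans ?_
  have h2 : ∫ y in Ioi x, rexp (-(2*y)) * |u y| ≤ ∫ y in Ioi x, rexp (-(2*x)) * |u y| := by
    refine setIntegral_mono_on
      (((intB u x).mono_set Ioi_subset_Ici_self).abs.congr
        (Eventually.of_forall fun y => by simp [abs_mul, abs_exp]))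
      ((u.integrable.abs.const_mul (rexp (-(2*x)))).restrict) measurableSet_Ioi fun y hy => ?_
    exact mul_le_mul_of_nonneg_right (exp_le_exp.2 (by have := Set.mem_Ioi.1 hy; linarith))
      (abs_nonneg _)
  refine h2.trans ?_
  rw [MeasureTheory.integral_const_mul]
  refine mul_le_mul_of_nonneg_left ?_ (exp_nonneg _)
  exact setIntegral_le_integral u.integrable.abs (Eventually.of_forall fun y => abs_nonneg _)

end Stmt4Aux


open Stmt4Aux

/-- Integration-by-parts identity: for a Schwartz function `u`, with
`m = u - u''` and `w = p₂ * u` (where `p₂(x) = (1/4)·exp(−2|x|)`, so that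
`4w - w'' = u`), one has `∫ w (m u)' = ∫ w' u² - ∫ w' (u')²`. -/
theorem stmt_4 (u : SchwartzMap ℝ ℝ)
    (p₂ : ℝ → ℝ) (hp : ∀ x, p₂ x = (1 / 4) * Real.exp (-2 * |x|))
    (w : ℝ → ℝ) (hw : ∀ x, w x = ∫ y, p₂ (x - y) * u y)
    (m : ℝ → ℝ) (hm : ∀ x, m x = u x - deriv (deriv (u : ℝ → ℝ)) x) :
    ∫ x, w x * deriv (fun y => m y * u y) x
      = (∫ x, deriv w x * (u x) ^ 2) - ∫ x, deriv w x * (deriv (u : ℝ → ℝ) x) ^ 2 := by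
  classical
  -- Schwartz derivatives
  set u1 : SchwartzMap ℝ ℝ := SchwartzMap.derivCLM ℝ ℝ u with hu1def
  set u2 : SchwartzMap ℝ ℝ := SchwartzMap.derivCLM ℝ ℝ u1 with hu2def
  set u3 : SchwartzMap ℝ ℝ := SchwartzMap.derivCLM ℝ ℝ u2 with hu3def
  have hd1 : deriv (⇑u) = ⇑u1 := funext fun x => rfl
  have hd2 : deriv (⇑u1) = ⇑u2 := funext fun x => rfl
  have hd3 : deriv (⇑u2) = ⇑u3 := funext fun x => rfl
  have hDu : ∀ x, HasDerivAt (⇑u) (u1 x) x := fun x => by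
    have := (u.differentiable x).hasDerivAt; rwa [congrFun hd1 x] at this
  have hDu1 : ∀ x, HasDerivAt (⇑u1) (u2 x) x := fun x => by
    have := (u1.differentiable x).hasDerivAt; rwa [congrFun hd2 x] at this
  have hDu2 : ∀ x, HasDerivAt (⇑u2) (u3 x) x := fun x => by
    have := (u2.differentiable x).hasDerivAt; rwa [congrFun hd3 x] at this
  -- the derivative of w
  set W1 : ℝ → ℝ := fun x => (1/2) * (-(rexp (-(2*x)) * A u x) + rexp (2*x) * B u x)
    with hW1def
  have hwW : ∀ x, w x = (1/4) * (rexp (-(2*x)) * A u x + rexp (2*x) * B u x) :=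
    w_eq u p₂ hp w hw
  have hea : ∀ x : ℝ, HasDerivAt (fun z : ℝ => rexp (-(2*z))) (rexp (-(2*x)) * (-2)) x := by
    intro x
    have h : HasDerivAt (fun z : ℝ => -(2*z)) (-2) x := by
      simpa using ((hasDerivAt_id x).const_mul (2:ℝ)).fun_neg
    exact h.exp
  have heb : ∀ x : ℝ, HasDerivAt (fun z : ℝ => rexp (2*z)) (rexp (2*x) * 2) x := by
    intro x
    have h : HasDerivAt (fun z : ℝ => 2*z) (2) x := by
      simpa using ((hasDerivAt_id x).const_mul (2:ℝ))
    exact h.exp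
  have hw1 : ∀ x, HasDerivAt w (W1 x) x := by
    intro x
    have H := ((((hea x).fun_mul (hasDerivAt_A u x)).fun_add
      ((heb x).fun_mul (hasDerivAt_B u x))).const_mul (1/4 : ℝ))
    have H2 : HasDerivAt (fun z => (1/4) * (rexp (-(2*z)) * A u z + rexp (2*z) * B u z))
        (W1 x) x := by
      refine H.congr_deriv (Eq.symm ?_)
      rw [hW1def]; ring
    exact H2.congr_of_eventuallyEq (Filter.Eventually.of_forall hwW)
  have hw2 : ∀ x, HasDerivAt W1 (4 * w x - u x) x := by
    intro x
    have H := (((((hea x).fun_mul (hasDerivAt_A u x)).fun_neg).fun_add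
      ((heb x).fun_mul (hasDerivAt_B u x))).const_mul (1/2 : ℝ))
    refine H.congr_deriv (Eq.symm ?_)
    have hc : rexp (-(2*x)) * rexp (2*x) = 1 := by rw [← exp_add]; norm_num
    rw [hwW x]
    linear_combination (u x) * hc
  -- bounds
  set M : ℝ := ∫ y, |u y| with hMdef
  have hwb : ∀ x, |w x| ≤ M := by
    intro x
    have hc : rexp (-(2*x)) * rexp (2*x) = 1 := by rw [← exp_add]; norm_num
    have h1 : rexp (-(2*x)) * |A u x| ≤ M := by
      calc rexp (-(2*x)) * |A u x| ≤ rexp (-(2*x)) * (rexp (2*x) * M) :=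
            mul_le_mul_of_nonneg_left (A_bound u x) (exp_nonneg _)
        _ = M := by rw [← mul_assoc, hc, one_mul]
    have h2 : rexp (2*x) * |B u x| ≤ M := by
      calc rexp (2*x) * |B u x| ≤ rexp (2*x) * (rexp (-(2*x)) * M) :=
            mul_le_mul_of_nonneg_left (B_bound u x) (exp_nonneg _)
        _ = M := by rw [← mul_assoc, mul_comm (rexp (2*x)), hc, one_mul]
    have habs : |rexp (-(2*x)) * A u x + rexp (2*x) * B u x| ≤ M + M := by
      refine (abs_add_le _ _).trans ?_
      rw [abs_mul, abs_mul, abs_exp, abs_exp]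
      linarith
    rw [hwW x, abs_mul, abs_of_pos (by norm_num : (0:ℝ) < 1/4)]
    linarith [abs_nonneg (rexp (-(2*x)) * A u x + rexp (2*x) * B u x)]
  have hW1b : ∀ x, |W1 x| ≤ M := by
    intro x
    have hc : rexp (-(2*x)) * rexp (2*x) = 1 := by rw [← exp_add]; norm_num
    have h1 : rexp (-(2*x)) * |A u x| ≤ M := by
      calc rexp (-(2*x)) * |A u x| ≤ rexp (-(2*x)) * (rexp (2*x) * M) :=
            mul_le_mul_of_nonneg_left (A_bound u x) (exp_nonneg _)
        _ = M := by rw [← mul_assoc, hc, one_mul]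
    have h2 : rexp (2*x) * |B u x| ≤ M := by
      calc rexp (2*x) * |B u x| ≤ rexp (2*x) * (rexp (-(2*x)) * M) :=
            mul_le_mul_of_nonneg_left (B_bound u x) (exp_nonneg _)
        _ = M := by rw [← mul_assoc, mul_comm (rexp (2*x)), hc, one_mul]
    have habs : |-(rexp (-(2*x)) * A u x) + rexp (2*x) * B u x| ≤ M + M := by
      refine (abs_add_le _ _).trans ?_
      rw [abs_neg, abs_mul, abs_mul, abs_exp, abs_exp]
      linarith
    rw [hW1def]
    simp only
    rw [abs_mul, abs_of_pos (by norm_num : (0:ℝ) < 1/2)]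
    linarith [abs_nonneg (-(rexp (-(2*x)) * A u x) + rexp (2*x) * B u x)]
  -- continuity
  have hwdiff : Differentiable ℝ w := fun x => (hw1 x).differentiableAt
  have hW1diff : Differentiable ℝ W1 := fun x => (hw2 x).differentiableAt
  have hwc : Continuous w := hwdiff.continuous
  have hW1c : Continuous W1 := hW1diff.continuous
  -- integrability machinery
  have main_int : ∀ (c : ℝ → ℝ), Continuous c → (∃ C, ∀ x, |c x| ≤ C) →
      ∀ (g : SchwartzMap ℝ ℝ), Integrable (fun x => c x * g x) := by
    rintro c hc ⟨C, hC⟩ g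
    exact g.integrable.bdd_mul (c := C) hc.aestronglyMeasurable (Eventually.of_forall fun x => by simpa using hC x)
  have bprod : ∀ {c d : ℝ → ℝ}, (∃ C, ∀ x, |c x| ≤ C) → (∃ C, ∀ x, |d x| ≤ C) →
      ∃ C, ∀ x, |c x * d x| ≤ C := by
    rintro c d ⟨C, hC⟩ ⟨D, hD⟩
    exact ⟨C * D, fun x => by
      rw [abs_mul]
      exact mul_le_mul (hC x) (hD x) (abs_nonneg _) ((abs_nonneg _).trans (hC 0))⟩
  have bsub : ∀ {c d : ℝ → ℝ}, (∃ C, ∀ x, |c x| ≤ C) → (∃ C, ∀ x, |d x| ≤ C) →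
      ∃ C, ∀ x, |c x - d x| ≤ C := by
    rintro c d ⟨C, hC⟩ ⟨D, hD⟩
    refine ⟨C + D, fun x => ?_⟩
    have := norm_sub_le (c x) (d x)
    simp only [Real.norm_eq_abs] at this
    linarith [hC x, hD x]
  have bw : ∃ C, ∀ x, |w x| ≤ C := ⟨M, hwb⟩
  have bW1 : ∃ C, ∀ x, |W1 x| ≤ C := ⟨M, hW1b⟩
  have bu : ∃ C, ∀ x, |u x| ≤ C := bound u
  have bu1 : ∃ C, ∀ x, |u1 x| ≤ C := bound u1
  have bu2 : ∃ C, ∀ x, |u2 x| ≤ C := bound u2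
  have b4wu : ∃ C, ∀ x, |4 * w x - u x| ≤ C := by
    refine bsub ?_ bu
    obtain ⟨C, hC⟩ := bw
    exact ⟨4 * C, fun x => by rw [abs_mul]; norm_num; linarith [hC x]⟩
  -- the function Q = m * u and its derivative
  set Q : ℝ → ℝ := fun x => (u x - u2 x) * u x with hQdef
  set Q' : ℝ → ℝ := fun x => (u1 x - u3 x) * u x + (u x - u2 x) * u1 x with hQ'def
  have hmQ : (fun y => m y * u y) = Q := by
    funext y
    rw [hm, hQdef, hd1, hd2]
  have hQ : ∀ x, HasDerivAt Q (Q' x) x := fun x => ((hDu x).sub (hDu2 x)).mul (hDu x)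
  -- all needed integrability facts
  have int_wQ' : Integrable (fun x => w x * Q' x) := by
    have i1 : Integrable (fun x => (w x * (u1 x - u3 x)) * u x) :=
      main_int _ (hwc.mul (u1.continuous.sub u3.continuous)) (bprod bw (bsub bu1 (bound u3))) u
    have i2 : Integrable (fun x => (w x * (u x - u2 x)) * u1 x) :=
      main_int _ (hwc.mul (u.continuous.sub u2.continuous)) (bprod bw (bsub bu bu2)) u1
    refine (i1.add i2).congr (Filter.Eventually.of_forall fun x => ?_)
    simp only [Pi.add_apply, hQ'def]; ring
  have int_W1Q : Integrable (fun x => W1 x * Q x) := by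
    have i1 : Integrable (fun x => (W1 x * (u x - u2 x)) * u x) :=
      main_int _ (hW1c.mul (u.continuous.sub u2.continuous)) (bprod bW1 (bsub bu bu2)) u
    refine i1.congr (Filter.Eventually.of_forall fun x => ?_)
    rw [hQdef]; ring
  have int_wQ : Integrable (fun x => w x * Q x) := by
    have i1 : Integrable (fun x => (w x * (u x - u2 x)) * u x) :=
      main_int _ (hwc.mul (u.continuous.sub u2.continuous)) (bprod bw (bsub bu bu2)) u
    refine i1.congr (Filter.Eventually.of_forall fun x => ?_)
    rw [hQdef]; ring
  have int_W1uu : Integrable (fun x => W1 x * (u x * u x)) := by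
    have i1 : Integrable (fun x => (W1 x * u x) * u x) :=
      main_int _ (hW1c.mul u.continuous) (bprod bW1 bu) u
    refine i1.congr (Filter.Eventually.of_forall fun x => by ring)
  have int_W1u1u1 : Integrable (fun x => W1 x * (u1 x * u1 x)) := by
    have i1 : Integrable (fun x => (W1 x * u1 x) * u1 x) :=
      main_int _ (hW1c.mul u1.continuous) (bprod bW1 bu1) u1
    refine i1.congr (Filter.Eventually.of_forall fun x => by ring)
  have int_W1u2u : Integrable (fun x => W1 x * (u2 x * u x)) := by
    have i1 : Integrable (fun x => (W1 x * u2 x) * u x) :=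
      main_int _ (hW1c.mul u2.continuous) (bprod bW1 bu2) u
    refine i1.congr (Filter.Eventually.of_forall fun x => by ring)
  have int_W1uu2 : Integrable (fun x => (W1 x * u x) * u2 x) :=
    main_int _ (hW1c.mul u.continuous) (bprod bW1 bu) u2
  have int_W1uu1 : Integrable (fun x => (W1 x * u x) * u1 x) :=
    main_int _ (hW1c.mul u.continuous) (bprod bW1 bu) u1
  have int_4wuu1 : Integrable (fun x => ((4 * w x - u x) * u x) * u1 x) :=
    main_int _ (((continuous_const.mul hwc).sub u.continuous).mul u.continuous)
      (bprod b4wu bu) u1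
  have int_wuu1 : Integrable (fun x => w x * (u x * u1 x)) := by
    have i1 : Integrable (fun x => (w x * u x) * u1 x) :=
      main_int _ (hwc.mul u.continuous) (bprod bw bu) u1
    refine i1.congr (Filter.Eventually.of_forall fun x => by ring)
  have int_uuu1 : Integrable (fun x => (u x * u x) * u1 x) :=
    main_int _ (u.continuous.mul u.continuous) (bprod bu bu) u1
  have int_uuu : Integrable (fun x => (u x * u x) * u x) :=
    main_int _ (u.continuous.mul u.continuous) (bprod bu bu) u
  have int_u1uu : Integrable (fun x => (u1 x * u x + u x * u1 x) * u x) := by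
    have i1 : Integrable (fun x => (u1 x * u x) * u x) :=
      main_int _ (u1.continuous.mul u.continuous) (bprod bu1 bu) u
    have i2 : Integrable (fun x => (u x * u1 x) * u x) :=
      main_int _ (u.continuous.mul u1.continuous) (bprod bu bu1) u
    refine (i1.add i2).congr (Filter.Eventually.of_forall fun x => by
      simp only [Pi.add_apply]; ring)
  have int_wuu1' : Integrable (fun x => w x * (u1 x * u x + u x * u1 x)) := by
    have i1 : Integrable (fun x => (w x * u1 x) * u x) :=
      main_int _ (hwc.mul u1.continuous) (bprod bw bu1) u
    have i2 : Integrable (fun x => (w x * u x) * u1 x) :=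
      main_int _ (hwc.mul u.continuous) (bprod bw bu) u1
    refine (i1.add i2).congr (Filter.Eventually.of_forall fun x => by
      simp only [Pi.add_apply]; ring)
  have int_wuu : Integrable (fun x => w x * (u x * u x)) := by
    have i1 : Integrable (fun x => (w x * u x) * u x) :=
      main_int _ (hwc.mul u.continuous) (bprod bw bu) u
    refine i1.congr (Filter.Eventually.of_forall fun x => by ring)
  -- P' integrable (for IBP2)
  have int_P'u1 : Integrable (fun x => ((4 * w x - u x) * u x + W1 x * u1 x) * u1 x) := by
    have i2 : Integrable (fun x => (W1 x * u1 x) * u1 x) :=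
      main_int _ (hW1c.mul u1.continuous) (bprod bW1 bu1) u1
    refine (int_4wuu1.add i2).congr (Filter.Eventually.of_forall fun x => by
      simp only [Pi.add_apply]; ring)
  -- IBP 1 : ∫ w Q' = - ∫ W1 Q
  have IBP1 : ∫ x, w x * Q' x = - ∫ x, W1 x * Q x := by
    exact MeasureTheory.integral_mul_deriv_eq_deriv_mul_of_integrable
      (fun x _ => hw1 x) (fun x _ => hQ x) int_wQ' int_W1Q int_wQ
  -- IBP 2 : ∫ (W1 u) u2 = - ∫ ((4w - u)u + W1 u1) u1
  have hP : ∀ x, HasDerivAt (fun x => W1 x * u x)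
      ((4 * w x - u x) * u x + W1 x * u1 x) x := fun x => (hw2 x).mul (hDu x)
  have IBP2 : ∫ x, (W1 x * u x) * u2 x
      = - ∫ x, ((4 * w x - u x) * u x + W1 x * u1 x) * u1 x := by
    exact MeasureTheory.integral_mul_deriv_eq_deriv_mul_of_integrable
      (fun x _ => hP x) (fun x _ => hDu1 x) int_W1uu2 int_P'u1 int_W1uu1
  -- IBP 3 : ∫ (u u) u1 = - ∫ (u1 u + u u1) u
  have hUU : ∀ x, HasDerivAt (fun x => u x * u x) (u1 x * u x + u x * u1 x) x :=
    fun x => (hDu x).mul (hDu x)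
  have IBP3 : ∫ x, (u x * u x) * u1 x = - ∫ x, (u1 x * u x + u x * u1 x) * u x := by
    exact MeasureTheory.integral_mul_deriv_eq_deriv_mul_of_integrable
      (fun x _ => hUU x) (fun x _ => hDu x) int_uuu1 int_u1uu int_uuu
  -- IBP 4 : ∫ w (u1 u + u u1) = - ∫ W1 (u u)
  have IBP4 : ∫ x, w x * (u1 x * u x + u x * u1 x) = - ∫ x, W1 x * (u x * u x) := by
    exact MeasureTheory.integral_mul_deriv_eq_deriv_mul_of_integrable
      (fun x _ => hw1 x) (fun x _ => hUU x) int_wuu1' int_W1uu int_wuu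
  -- derived relations
  have E3 : ∫ x, (u x * u x) * u1 x = 0 := by
    have h : ∫ x, (u1 x * u x + u x * u1 x) * u x = 2 * ∫ x, (u x * u x) * u1 x := by
      rw [← MeasureTheory.integral_const_mul]
      exact MeasureTheory.integral_congr_ae (Filter.Eventually.of_forall fun x => by ring)
    rw [h] at IBP3
    linarith
  have E4 : 2 * (∫ x, w x * (u x * u1 x)) = - ∫ x, W1 x * (u x * u x) := by
    have h : ∫ x, w x * (u1 x * u x + u x * u1 x) = 2 * ∫ x, w x * (u x * u1 x) := by
      rw [← MeasureTheory.integral_const_mul]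
      exact MeasureTheory.integral_congr_ae (Filter.Eventually.of_forall fun x => by ring)
    rw [h] at IBP4
    linarith
  -- split ∫ W1 Q
  have E2 : ∫ x, W1 x * Q x
      = (∫ x, W1 x * (u x * u x)) - ∫ x, W1 x * (u2 x * u x) := by
    rw [← MeasureTheory.integral_sub int_W1uu int_W1u2u]
    exact MeasureTheory.integral_congr_ae (Filter.Eventually.of_forall fun x => by
      rw [hQdef]; ring)
  -- split ∫ P' u1
  have E5 : ∫ x, ((4 * w x - u x) * u x + W1 x * u1 x) * u1 x
      = 4 * (∫ x, w x * (u x * u1 x)) - (∫ x, (u x * u x) * u1 x)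
        + ∫ x, W1 x * (u1 x * u1 x) := by
    have i2 : Integrable (fun x => (u x * u x) * u1 x) := int_uuu1
    have i3 : Integrable (fun x => W1 x * (u1 x * u1 x)) := int_W1u1u1
    have i4 : Integrable (fun x => 4 * (w x * (u x * u1 x))) := int_wuu1.const_mul 4
    have i42 : Integrable (fun x => 4 * (w x * (u x * u1 x)) - u x * u x * u1 x) := i4.sub i2
    have h0 : ∫ x, ((4 * w x - u x) * u x + W1 x * u1 x) * u1 x
        = ∫ x, (4 * (w x * (u x * u1 x)) - u x * u x * u1 x + W1 x * (u1 x * u1 x)) :=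
      MeasureTheory.integral_congr_ae (Filter.Eventually.of_forall fun x => by ring)
    rw [h0, MeasureTheory.integral_add i42 i3,
      MeasureTheory.integral_sub i4 i2, MeasureTheory.integral_const_mul]
  have E6 : ∫ x, W1 x * (u2 x * u x) = ∫ x, (W1 x * u x) * u2 x :=
    MeasureTheory.integral_congr_ae (Filter.Eventually.of_forall fun x => by ring)
  -- final rewriting of the goal
  have hderivw : deriv w = W1 := funext fun x => (hw1 x).deriv
  have hderivQ : deriv (fun y => m y * u y) = Q' := by
    rw [hmQ]; exact funext fun x => (hQ x).deriv
  rw [hderivw, hderivQ, hd1]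
  simp only [pow_two]
  -- conclude by linear arithmetic over the basic integrals
  rw [IBP1, E2, E6, IBP2, E5, E3]
  linarith [E3, E4]
end

section
/- Let p₂(x) = (1/4)·exp(−2|x|). For every Schwartz function u : ℝ → ℝ, setting m = u − u'' and w = p₂ * u, one has 2 ∫_ℝ w(x) m(x) u'(x) dx = −∫_ℝ w'(x) u(x)² dx + ∫_ℝ w'(x) (u'(x))² dx. -/
open MeasureTheory Real
open Filter Metric Topology

namespace Stmt5Aux

noncomputable def q : ℝ → ℝ := fun x => (1/4) * Real.exp (-2 * |x|)

lemma q_cont : Continuous q :=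
  continuous_const.mul (Real.continuous_exp.comp (continuous_const.mul continuous_abs))

lemma q_nonneg (x : ℝ) : 0 ≤ q x := by
  have := Real.exp_pos (-2 * |x|)
  unfold q; positivity

lemma q_integrable : Integrable q := by
  apply Integrable.const_mul
  apply integrable_inv_one_add_sq.mono'
    ((Real.continuous_exp.comp (continuous_const.mul continuous_abs)).aestronglyMeasurable)
  filter_upwards with x
  simp only [Function.comp_apply]
  rw [Real.norm_of_nonneg (Real.exp_pos _).le]
  have h1 : 1 + x ^ 2 ≤ Real.exp (2 * |x|) := by
    have h2 : (1 : ℝ) + |x| ≤ Real.exp |x| := by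
      have := Real.add_one_le_exp |x|
      linarith
    have h3 : Real.exp (2 * |x|) = Real.exp |x| * Real.exp |x| := by
      rw [two_mul, Real.exp_add]
    nlinarith [abs_nonneg x, sq_abs x, Real.exp_pos |x|]
  have h4 : Real.exp (-2 * |x|) = (Real.exp (2 * |x|))⁻¹ := by
    rw [← Real.exp_neg]; ring_nf
  show Real.exp (-2 * |x|) ≤ _; rw [h4]
  exact inv_anti₀ (by positivity) h1

end Stmt5Aux

namespace Stmt5Aux

/-- Integration by parts on the whole real line. -/
lemma ibp (w W : ℝ → ℝ) (hW : ∀ x, HasDerivAt w (W x) x)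
    (Cw CW : ℝ) (hbw : ∀ x, ‖w x‖ ≤ Cw) (hbW : ∀ x, ‖W x‖ ≤ CW)
    (f f' : ℝ → ℝ) (hf : ∀ x, HasDerivAt f (f' x) x)
    (hfi : Integrable f) (hf'i : Integrable f')
    (hf0 : Tendsto f (cocompact ℝ) (𝓝 0)) :
    ∫ x, w x * f' x = - ∫ x, W x * f x := by
  have hWm : AEStronglyMeasurable W volume := by
    have : W = deriv w := funext fun x => ((hW x).deriv).symm
    rw [this]
    exact (measurable_deriv w).aestronglyMeasurable
  have hwc : Continuous w := by
    have : Differentiable ℝ w := fun x => (hW x).differentiableAt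
    exact this.continuous
  have int1 : Integrable (fun x => W x * f x) :=
    hfi.bdd_mul hWm (Filter.Eventually.of_forall hbW)
  have int2 : Integrable (fun x => w x * f' x) :=
    hf'i.bdd_mul hwc.aestronglyMeasurable (Filter.Eventually.of_forall hbw)
  set g : ℝ → ℝ := fun x => w x * f x with hg
  set g' : ℝ → ℝ := fun x => W x * f x + w x * f' x with hg'
  have hgd : ∀ x, HasDerivAt g (g' x) x := fun x => (hW x).mul (hf x)
  have hg'i : Integrable g' := int1.add int2
  have hCw0 : 0 ≤ Cw := le_trans (norm_nonneg _) (hbw 0)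
  have hnorm : ∀ x, ‖g x‖ ≤ Cw * ‖f x‖ := by
    intro x
    rw [hg]
    calc ‖w x * f x‖ = ‖w x‖ * ‖f x‖ := norm_mul _ _
    _ ≤ Cw * ‖f x‖ := by
      exact mul_le_mul_of_nonneg_right (hbw x) (norm_nonneg _)
  have hlim : Tendsto (fun x => Cw * ‖f x‖) (cocompact ℝ) (𝓝 0) := by
    have := (hf0.norm).const_mul Cw
    simpa using this
  have hgtop : Tendsto g atTop (𝓝 0) := by
    refine squeeze_zero_norm hnorm (hlim.mono_left ?_)
    rw [cocompact_eq_atBot_atTop]; exact le_sup_right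
  have hgbot : Tendsto g atBot (𝓝 0) := by
    refine squeeze_zero_norm hnorm (hlim.mono_left ?_)
    rw [cocompact_eq_atBot_atTop]; exact le_sup_left
  have h1 : ∫ x in Set.Ioi (0:ℝ), g' x = 0 - g 0 :=
    integral_Ioi_of_hasDerivAt_of_tendsto' (fun x _ => hgd x) hg'i.integrableOn hgtop
  have h2 : ∫ x in Set.Iic (0:ℝ), g' x = g 0 - 0 :=
    integral_Iic_of_hasDerivAt_of_tendsto' (fun x _ => hgd x) hg'i.integrableOn hgbot
  have h3 : ∫ x, g' x = 0 := by
    rw [← intervalIntegral.integral_Iic_add_Ioi hg'i.integrableOn hg'i.integrableOn, h1, h2]; ring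
  have h4 : ∫ x, g' x = (∫ x, W x * f x) + ∫ x, w x * f' x := integral_add int1 int2
  linarith [h3, h4.symm]

end Stmt5Aux

namespace Stmt5Aux

lemma schwartz_bound (v : SchwartzMap ℝ ℝ) : ∃ C, ∀ x, ‖v x‖ ≤ C := by
  obtain ⟨C, hC⟩ := v.decay 0 0
  refine ⟨C, fun x => ?_⟩
  have := hC.2 x
  simpa [norm_iteratedFDeriv_zero] using this

lemma deriv_coe (v : SchwartzMap ℝ ℝ) : deriv (v : ℝ → ℝ) = ⇑(SchwartzMap.derivCLM ℝ ℝ v) :=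
  funext fun x => (SchwartzMap.derivCLM_apply ℝ v x).symm

lemma conv_integrable (v : SchwartzMap ℝ ℝ) (x : ℝ) :
    Integrable (fun y => v (x - y) * q y) := by
  obtain ⟨Cv, hCv⟩ := schwartz_bound v
  exact q_integrable.bdd_mul
    ((v.continuous.comp (continuous_const.sub continuous_id)).aestronglyMeasurable)
    (Filter.Eventually.of_forall fun y => hCv _)

lemma conv_bound (v : SchwartzMap ℝ ℝ) :
    ∃ C, ∀ x, ‖∫ y, v (x - y) * q y‖ ≤ C := by
  obtain ⟨Cv, hCv⟩ := schwartz_bound v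
  refine ⟨Cv * ∫ y, q y, fun x => ?_⟩
  calc ‖∫ y, v (x - y) * q y‖ ≤ ∫ y, ‖v (x - y) * q y‖ :=
        norm_integral_le_integral_norm _
    _ ≤ ∫ y, Cv * q y := by
        refine integral_mono (conv_integrable v x).norm (q_integrable.const_mul Cv) fun y => ?_
        rw [norm_mul, Real.norm_of_nonneg (q_nonneg y)]
        exact mul_le_mul_of_nonneg_right (hCv _) (q_nonneg y)
    _ = Cv * ∫ y, q y := MeasureTheory.integral_const_mul Cv q

lemma conv_hasDerivAt (v : SchwartzMap ℝ ℝ) (x₀ : ℝ) :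
    HasDerivAt (fun x => ∫ y, v (x - y) * q y)
      (∫ y, deriv (v : ℝ → ℝ) (x₀ - y) * q y) x₀ := by
  obtain ⟨C, hC⟩ := schwartz_bound (SchwartzMap.derivCLM ℝ ℝ v)
  have hC' : ∀ z, ‖deriv (v : ℝ → ℝ) z‖ ≤ C := by
    intro z
    rw [deriv_coe]
    exact hC z
  have hdc : Continuous (deriv (v : ℝ → ℝ)) := by
    rw [deriv_coe]; exact (SchwartzMap.derivCLM ℝ ℝ v).continuous
  have hvd : ∀ z, HasDerivAt (v : ℝ → ℝ) (deriv (v : ℝ → ℝ) z) z := fun z =>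
    (v.differentiable z).hasDerivAt
  have key := hasDerivAt_integral_of_dominated_loc_of_deriv_le (μ := volume)
      (F := fun x y => v (x - y) * q y)
      (F' := fun x y => deriv (v : ℝ → ℝ) (x - y) * q y)
      (x₀ := x₀) (bound := fun y => C * q y) (s := Metric.ball x₀ 1) (Metric.ball_mem_nhds x₀ one_pos)
      (Filter.Eventually.of_forall fun x =>
        ((v.continuous.comp (continuous_const.sub continuous_id)).mul q_cont).aestronglyMeasurable)
      (conv_integrable v x₀)
      (((hdc.comp (continuous_const.sub continuous_id)).mul q_cont).aestronglyMeasurable)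
      (Filter.Eventually.of_forall fun y => fun x _ => by
        rw [norm_mul, Real.norm_of_nonneg (q_nonneg y)]
        exact mul_le_mul_of_nonneg_right (hC' _) (q_nonneg y))
      (q_integrable.const_mul C)
      (Filter.Eventually.of_forall fun y => fun x _ => by
        have h1 : HasDerivAt (fun x : ℝ => x - y) 1 x := (hasDerivAt_id x).sub_const y
        have h2 := ((hvd (x - y)).comp x h1).mul_const (q y)
        simpa using h2)
  exact key.2

end Stmt5Aux

open Stmt5Aux

/-- Integration-by-parts identity: for a Schwartz function `u`, with
`m = u - u''` and `w = p₂ * u` (where `p₂(x) = (1/4)·exp(−2|x|)`, so that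
`4w - w'' = u`), one has `2 ∫ w m u' = −∫ w' u² + ∫ w' (u')²`. -/
theorem stmt_5 (u : SchwartzMap ℝ ℝ)
    (p₂ : ℝ → ℝ) (hp : ∀ x, p₂ x = (1 / 4) * Real.exp (-2 * |x|))
    (w : ℝ → ℝ) (hw : ∀ x, w x = ∫ y, p₂ (x - y) * u y)
    (m : ℝ → ℝ) (hm : ∀ x, m x = u x - deriv (deriv (u : ℝ → ℝ)) x) :
    2 * ∫ x, w x * m x * deriv (u : ℝ → ℝ) x
      = -(∫ x, deriv w x * (u x) ^ 2) + ∫ x, deriv w x * (deriv (u : ℝ → ℝ) x) ^ 2 := by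
  set u' : SchwartzMap ℝ ℝ := SchwartzMap.derivCLM ℝ ℝ u with hu'def
  set u'' : SchwartzMap ℝ ℝ := SchwartzMap.derivCLM ℝ ℝ u' with hu''def
  have hu' : deriv (u : ℝ → ℝ) = ⇑u' := deriv_coe u
  have hu'' : deriv (deriv (u : ℝ → ℝ)) = ⇑u'' := by rw [hu']; exact deriv_coe u'
  obtain ⟨Cu, hCu⟩ := schwartz_bound u
  obtain ⟨Cu', hCu'⟩ := schwartz_bound u'
  obtain ⟨Cu'', hCu''⟩ := schwartz_bound u''
  -- rewrite w as convolution with q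
  have hwq : ∀ x, w x = ∫ y, u (x - y) * q y := by
    intro x
    rw [hw x, ← MeasureTheory.integral_sub_left_eq_self (fun y => p₂ (x - y) * u y) volume x]
    congr 1
    funext y
    simp only [sub_sub_cancel]
    rw [hp y, mul_comm]
    rfl
  set W : ℝ → ℝ := fun x => ∫ y, u' (x - y) * q y with hWdef
  have hWd : ∀ x, HasDerivAt w (W x) x := by
    intro x
    have h := conv_hasDerivAt u x
    rw [hu'] at h
    exact h.congr_of_eventuallyEq (Filter.Eventually.of_forall hwq)
  have hderivw : deriv w = W := funext fun x => (hWd x).deriv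
  obtain ⟨Cw, hCw⟩ := conv_bound u
  have hCw' : ∀ x, ‖w x‖ ≤ Cw := fun x => by rw [hwq x]; exact hCw x
  obtain ⟨CW, hCW⟩ := conv_bound u'
  have hCW' : ∀ x, ‖W x‖ ≤ CW := fun x => hCW x
  -- the two squared functions
  have hu0 : Filter.Tendsto (u : ℝ → ℝ) (Filter.cocompact ℝ) (𝓝 0) := zero_at_infty u
  have hu'0 : Filter.Tendsto (u' : ℝ → ℝ) (Filter.cocompact ℝ) (𝓝 0) := zero_at_infty u'
  have hf₁d : ∀ x, HasDerivAt (fun x => (u x : ℝ) ^ 2) (2 * (u x * u' x)) x := by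
    intro x
    have := ((u.differentiable x).hasDerivAt).fun_pow 2
    simp only [Nat.cast_ofNat, pow_one] at this
    rw [hu'] at this
    exact this.congr_deriv (by rw [show (2:ℕ) - 1 = 1 from rfl, pow_one]; ring)
  have hf₂d : ∀ x, HasDerivAt (fun x => (u' x : ℝ) ^ 2) (2 * (u'' x * u' x)) x := by
    intro x
    have := ((u'.differentiable x).hasDerivAt).fun_pow 2
    simp only [Nat.cast_ofNat, pow_one] at this
    rw [deriv_coe u'] at this
    exact this.congr_deriv (by rw [show (2:ℕ) - 1 = 1 from rfl, pow_one]; ring)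
  have hf₁i : Integrable (fun x => (u x : ℝ) ^ 2) := by
    have : Integrable (fun x => (u x : ℝ) * u x) :=
      u.integrable.bdd_mul u.continuous.aestronglyMeasurable (Filter.Eventually.of_forall hCu)
    simpa [sq] using this
  have hf₂i : Integrable (fun x => (u' x : ℝ) ^ 2) := by
    have : Integrable (fun x => (u' x : ℝ) * u' x) :=
      u'.integrable.bdd_mul u'.continuous.aestronglyMeasurable (Filter.Eventually.of_forall hCu')
    simpa [sq] using this
  have huu'i : Integrable (fun x => (u x : ℝ) * u' x) :=
    u'.integrable.bdd_mul u.continuous.aestronglyMeasurable (Filter.Eventually.of_forall hCu)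
  have hu''u'i : Integrable (fun x => (u'' x : ℝ) * u' x) :=
    u'.integrable.bdd_mul u''.continuous.aestronglyMeasurable (Filter.Eventually.of_forall hCu'')
  have hf₁'i : Integrable (fun x => 2 * ((u x : ℝ) * u' x)) := huu'i.const_mul 2
  have hf₂'i : Integrable (fun x => 2 * ((u'' x : ℝ) * u' x)) := hu''u'i.const_mul 2
  have hf₁0 : Filter.Tendsto (fun x => (u x : ℝ) ^ 2) (Filter.cocompact ℝ) (𝓝 0) := by
    have := hu0.mul hu0
    simpa [sq] using this
  have hf₂0 : Filter.Tendsto (fun x => (u' x : ℝ) ^ 2) (Filter.cocompact ℝ) (𝓝 0) := by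
    have := hu'0.mul hu'0
    simpa [sq] using this
  -- integration by parts twice
  have eq1 := ibp w W hWd Cw CW hCw' hCW' (fun x => (u x : ℝ) ^ 2)
    (fun x => 2 * (u x * u' x)) hf₁d hf₁i hf₁'i hf₁0
  have eq2 := ibp w W hWd Cw CW hCw' hCW' (fun x => (u' x : ℝ) ^ 2)
    (fun x => 2 * (u'' x * u' x)) hf₂d hf₂i hf₂'i hf₂0
  -- integrability of the LHS pieces
  have hwdiff : Differentiable ℝ w := fun x => (hWd x).differentiableAt
  have hwc : Continuous w := hwdiff.continuous
  have ia : Integrable (fun x => w x * (u x * u' x)) :=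
    huu'i.bdd_mul hwc.aestronglyMeasurable (Filter.Eventually.of_forall hCw')
  have ib : Integrable (fun x => w x * (u'' x * u' x)) :=
    hu''u'i.bdd_mul hwc.aestronglyMeasurable (Filter.Eventually.of_forall hCw')
  -- split the LHS integral
  have hsplit : (fun x => w x * m x * deriv (u : ℝ → ℝ) x)
      = fun x => w x * (u x * u' x) - w x * (u'' x * u' x) := by
    funext x
    rw [hm x, hu'', hu']
    ring
  have hL : ∫ x, w x * m x * deriv (u : ℝ → ℝ) x
      = (∫ x, w x * (u x * u' x)) - ∫ x, w x * (u'' x * u' x) := by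
    rw [hsplit]
    exact MeasureTheory.integral_sub ia ib
  -- pull out constants in eq1/eq2 LHS
  have h2a : ∫ x, w x * (2 * (u x * u' x)) = 2 * ∫ x, w x * (u x * u' x) := by
    rw [← MeasureTheory.integral_const_mul]
    congr 1; funext x; ring
  have h2b : ∫ x, w x * (2 * (u'' x * u' x)) = 2 * ∫ x, w x * (u'' x * u' x) := by
    rw [← MeasureTheory.integral_const_mul]
    congr 1; funext x; ring
  rw [h2a] at eq1
  rw [h2b] at eq2
  -- rewrite the RHS of the goal
  have hR1 : (fun x => deriv w x * (u x : ℝ) ^ 2) = fun x => W x * (u x : ℝ) ^ 2 := by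
    rw [hderivw]
  have hR2 : (fun x => deriv w x * (deriv (u : ℝ → ℝ) x) ^ 2)
      = fun x => W x * (u' x : ℝ) ^ 2 := by
    rw [hderivw, hu']
  rw [hL, hR1, hR2]
  linarith [eq1, eq2]
end

section
/- Let p₂(x) = (1/4)·exp(−2|x|). For every Schwartz function u : ℝ → ℝ, setting m = u − u'' and w = p₂ * u, one has ∫_ℝ w(x) · (3 m(x) u'(x) + m'(x) u(x)) dx = 0. -/
open MeasureTheory Real Set Filter

namespace DP6

variable (u : SchwartzMap ℝ ℝ)

noncomputable def A (x : ℝ) : ℝ := ∫ y in Iic x, Real.exp (2*y) * u y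
noncomputable def B (x : ℝ) : ℝ := ∫ y in Ioi x, Real.exp (-(2*y)) * u y

lemma contg : Continuous fun y : ℝ => Real.exp (2*y) * u y :=
  (Real.continuous_exp.comp (continuous_const.mul continuous_id)).mul u.continuous

lemma conth : Continuous fun y : ℝ => Real.exp (-(2*y)) * u y :=
  (Real.continuous_exp.comp (continuous_const.mul continuous_id).neg).mul u.continuous

lemma intg (x : ℝ) : IntegrableOn (fun y => Real.exp (2*y) * u y) (Iic x) := by
  refine Integrable.mono' ((u.integrable.norm.const_mul (Real.exp (2*x))).restrict)
    (contg u).aestronglyMeasurable.restrict ?_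
  rw [ae_restrict_iff' measurableSet_Iic]
  filter_upwards with y hy
  rw [norm_mul, Real.norm_eq_abs, Real.abs_exp]
  exact mul_le_mul_of_nonneg_right (Real.exp_le_exp.mpr (by linarith [hy.out]))
    (norm_nonneg _)

lemma inth (x : ℝ) : IntegrableOn (fun y => Real.exp (-(2*y)) * u y) (Ioi x) := by
  refine Integrable.mono' ((u.integrable.norm.const_mul (Real.exp (-(2*x)))).restrict)
    (conth u).aestronglyMeasurable.restrict ?_
  rw [ae_restrict_iff' measurableSet_Ioi]
  filter_upwards with y hy
  rw [norm_mul, Real.norm_eq_abs, Real.abs_exp]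
  exact mul_le_mul_of_nonneg_right (Real.exp_le_exp.mpr (by linarith [hy.out.le]))
    (norm_nonneg _)

lemma hasDerivAt_A (x : ℝ) : HasDerivAt (A u) (Real.exp (2*x) * u x) x := by
  have key : ∀ t ∈ Ioi (x - 1), A u t = A u (x-1) + ∫ y in (x-1)..t, Real.exp (2*y) * u y := by
    intro t ht
    rw [intervalIntegral.integral_of_le (by linarith [ht.out])]
    unfold A
    rw [← setIntegral_union (Iic_disjoint_Ioc le_rfl) measurableSet_Ioc (intg u _)
      ((contg u).integrableOn_Ioc), Iic_union_Ioc_eq_Iic (by linarith [ht.out])]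
  have hd : HasDerivAt (fun t => A u (x-1) + ∫ y in (x-1)..t, Real.exp (2*y) * u y)
      (Real.exp (2*x) * u x) x :=
    ((intervalIntegral.integral_hasDerivAt_right ((contg u).intervalIntegrable _ _)
      (contg u).stronglyMeasurable.stronglyMeasurableAtFilter (contg u).continuousAt).const_add _)
  exact hd.congr_of_eventuallyEq (eventuallyEq_of_mem (Ioi_mem_nhds (by linarith)) key)

lemma hasDerivAt_B (x : ℝ) : HasDerivAt (B u) (-(Real.exp (-(2*x)) * u x)) x := by
  have key : ∀ t ∈ Iio (x + 1), B u t = (∫ y in t..(x+1), Real.exp (-(2*y)) * u y) + B u (x+1) := by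
    intro t ht
    rw [intervalIntegral.integral_of_le (by linarith [ht.out])]
    unfold B
    rw [← setIntegral_union (Ioc_disjoint_Ioi le_rfl) measurableSet_Ioi
      ((conth u).integrableOn_Ioc) (inth u _), Ioc_union_Ioi_eq_Ioi (by linarith [ht.out])]
  have hd : HasDerivAt (fun t => (∫ y in t..(x+1), Real.exp (-(2*y)) * u y) + B u (x+1))
      (-(Real.exp (-(2*x)) * u x)) x :=
    ((intervalIntegral.integral_hasDerivAt_left ((conth u).intervalIntegrable _ _)
      (conth u).stronglyMeasurable.stronglyMeasurableAtFilter (conth u).continuousAt).add_const _)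
  exact hd.congr_of_eventuallyEq (eventuallyEq_of_mem (Iio_mem_nhds (by linarith)) key)

noncomputable def W (x : ℝ) : ℝ :=
  (1/4) * (Real.exp (-(2*x)) * A u x + Real.exp (2*x) * B u x)

noncomputable def W1 (x : ℝ) : ℝ :=
  (1/2) * (Real.exp (2*x) * B u x - Real.exp (-(2*x)) * A u x)

lemma expe (x : ℝ) : Real.exp (2*x) * Real.exp (-(2*x)) = 1 := by
  rw [← Real.exp_add]; norm_num

lemma repr (x : ℝ) :
    (∫ y, (1/4 : ℝ) * Real.exp (-2 * |x - y|) * u y) = W u x := by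
  have hcont : Continuous fun y : ℝ => (1/4 : ℝ) * Real.exp (-2 * |x - y|) * u y :=
    ((continuous_const.mul (Real.continuous_exp.comp
      (continuous_const.mul ((continuous_const.sub continuous_id).abs)))).mul u.continuous)
  have hint : Integrable fun y : ℝ => (1/4 : ℝ) * Real.exp (-2 * |x - y|) * u y := by
    refine Integrable.mono' (u.integrable.norm.const_mul (1/4)) hcont.aestronglyMeasurable ?_
    filter_upwards with y
    rw [norm_mul, norm_mul, Real.norm_eq_abs (1/4 : ℝ), Real.norm_eq_abs, Real.abs_exp,
      abs_of_nonneg (by norm_num : (0:ℝ) ≤ 1/4)]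
    have : Real.exp (-2 * |x - y|) ≤ 1 :=
      Real.exp_le_one_iff.mpr (by nlinarith [abs_nonneg (x - y)])
    nlinarith [norm_nonneg (u y), Real.exp_pos (-2 * |x - y|)]
  rw [show (∫ y, (1/4 : ℝ) * Real.exp (-2 * |x - y|) * u y)
      = (∫ y in Iic x, (1/4 : ℝ) * Real.exp (-2 * |x - y|) * u y)
        + ∫ y in Ioi x, (1/4 : ℝ) * Real.exp (-2 * |x - y|) * u y from by
    rw [← setIntegral_union (Iic_disjoint_Ioi le_rfl) measurableSet_Ioi hint.integrableOn
      hint.integrableOn, Iic_union_Ioi, setIntegral_univ]]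
  have h1 : (∫ y in Iic x, (1/4 : ℝ) * Real.exp (-2 * |x - y|) * u y)
      = (1/4) * (Real.exp (-(2*x)) * A u x) := by
    unfold A
    rw [← integral_const_mul, ← integral_const_mul]
    refine setIntegral_congr_fun measurableSet_Iic fun y hy => ?_
    rw [abs_of_nonneg (by linarith [hy.out] : (0:ℝ) ≤ x - y)]
    rw [show (-2 : ℝ) * (x - y) = -(2*x) + 2*y by ring, Real.exp_add]
    ring
  have h2 : (∫ y in Ioi x, (1/4 : ℝ) * Real.exp (-2 * |x - y|) * u y)
      = (1/4) * (Real.exp (2*x) * B u x) := by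
    unfold B
    rw [← integral_const_mul, ← integral_const_mul]
    refine setIntegral_congr_fun measurableSet_Ioi fun y hy => ?_
    rw [abs_of_nonpos (by linarith [hy.out] : x - y ≤ 0)]
    rw [show (-2 : ℝ) * -(x - y) = 2*x + -(2*y) by ring, Real.exp_add]
    ring
  rw [h1, h2]; unfold W; ring

lemma hasDerivAt_W (x : ℝ) : HasDerivAt (W u) (W1 u x) x := by
  have hexpn : HasDerivAt (fun t : ℝ => Real.exp (-(2*t))) (Real.exp (-(2*x)) * (-2)) x := by
    simpa using HasDerivAt.exp (((hasDerivAt_id x).const_mul (2:ℝ)).neg)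
  have hexpp : HasDerivAt (fun t : ℝ => Real.exp (2*t)) (Real.exp (2*x) * 2) x := by
    simpa using HasDerivAt.exp ((hasDerivAt_id x).const_mul (2:ℝ))
  have h := (((hexpn.mul (hasDerivAt_A u x)).add (hexpp.mul (hasDerivAt_B u x))).const_mul (1/4 : ℝ))
  refine h.congr_deriv ?_
  unfold W1
  ring

lemma hasDerivAt_W1 (x : ℝ) : HasDerivAt (W1 u) (4 * W u x - u x) x := by
  have hexpn : HasDerivAt (fun t : ℝ => Real.exp (-(2*t))) (Real.exp (-(2*x)) * (-2)) x := by
    simpa using HasDerivAt.exp (((hasDerivAt_id x).const_mul (2:ℝ)).neg)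
  have hexpp : HasDerivAt (fun t : ℝ => Real.exp (2*t)) (Real.exp (2*x) * 2) x := by
    simpa using HasDerivAt.exp ((hasDerivAt_id x).const_mul (2:ℝ))
  have h := (((hexpp.mul (hasDerivAt_B u x)).sub (hexpn.mul (hasDerivAt_A u x))).const_mul (1/2 : ℝ))
  refine h.congr_deriv ?_
  unfold W
  linear_combination (-(u x)) * expe x

lemma boundA (x : ℝ) : |Real.exp (-(2*x)) * A u x| ≤ ∫ y, ‖u y‖ := by
  have h1 : |A u x| ≤ Real.exp (2*x) * ∫ y, ‖u y‖ := by
    have hb : ‖A u x‖ ≤ ∫ y in Iic x, Real.exp (2*x) * ‖u y‖ := by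
      refine norm_integral_le_of_norm_le ((u.integrable.norm.const_mul (Real.exp (2*x))).restrict) ?_
      rw [ae_restrict_iff' measurableSet_Iic]
      filter_upwards with y hy
      rw [norm_mul, Real.norm_eq_abs, Real.abs_exp]
      exact mul_le_mul_of_nonneg_right (Real.exp_le_exp.mpr (by linarith [hy.out])) (norm_nonneg _)
    rw [Real.norm_eq_abs] at hb
    refine hb.trans ?_
    rw [integral_const_mul]
    exact mul_le_mul_of_nonneg_left
      (setIntegral_le_integral u.integrable.norm (Eventually.of_forall fun y => norm_nonneg _))
      (Real.exp_pos _).le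
  rw [abs_mul, Real.abs_exp]
  calc Real.exp (-(2*x)) * |A u x| ≤ Real.exp (-(2*x)) * (Real.exp (2*x) * ∫ y, ‖u y‖) :=
        mul_le_mul_of_nonneg_left h1 (Real.exp_pos _).le
    _ = ∫ y, ‖u y‖ := by rw [← mul_assoc, mul_comm (Real.exp (-(2*x))), expe x, one_mul]

lemma boundB (x : ℝ) : |Real.exp (2*x) * B u x| ≤ ∫ y, ‖u y‖ := by
  have h1 : |B u x| ≤ Real.exp (-(2*x)) * ∫ y, ‖u y‖ := by
    have hb : ‖B u x‖ ≤ ∫ y in Ioi x, Real.exp (-(2*x)) * ‖u y‖ := by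
      refine norm_integral_le_of_norm_le ((u.integrable.norm.const_mul (Real.exp (-(2*x)))).restrict) ?_
      rw [ae_restrict_iff' measurableSet_Ioi]
      filter_upwards with y hy
      rw [norm_mul, Real.norm_eq_abs, Real.abs_exp]
      exact mul_le_mul_of_nonneg_right (Real.exp_le_exp.mpr (by linarith [hy.out.le])) (norm_nonneg _)
    rw [Real.norm_eq_abs] at hb
    refine hb.trans ?_
    rw [integral_const_mul]
    exact mul_le_mul_of_nonneg_left
      (setIntegral_le_integral u.integrable.norm (Eventually.of_forall fun y => norm_nonneg _))
      (Real.exp_pos _).le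
  rw [abs_mul, Real.abs_exp]
  calc Real.exp (2*x) * |B u x| ≤ Real.exp (2*x) * (Real.exp (-(2*x)) * ∫ y, ‖u y‖) :=
        mul_le_mul_of_nonneg_left h1 (Real.exp_pos _).le
    _ = ∫ y, ‖u y‖ := by rw [← mul_assoc, expe x, one_mul]

lemma integral_norm_nonneg : (0:ℝ) ≤ ∫ y, ‖u y‖ :=
  integral_nonneg fun y => norm_nonneg _

lemma boundW (x : ℝ) : |W u x| ≤ ∫ y, ‖u y‖ := by
  unfold W
  rw [abs_mul, abs_of_nonneg (by norm_num : (0:ℝ) ≤ 1/4)]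
  have h := abs_add_le (Real.exp (-(2*x)) * A u x) (Real.exp (2*x) * B u x)
  have h1 := boundA u x
  have h2 := boundB u x
  have h3 := integral_norm_nonneg u
  linarith

lemma boundW1 (x : ℝ) : |W1 u x| ≤ ∫ y, ‖u y‖ := by
  unfold W1
  rw [abs_mul, abs_of_nonneg (by norm_num : (0:ℝ) ≤ 1/2)]
  have h := abs_sub (Real.exp (2*x) * B u x) (Real.exp (-(2*x)) * A u x)
  have h1 := boundA u x
  have h2 := boundB u x
  linarith

lemma schwartz_bound (f : SchwartzMap ℝ ℝ) : ∃ C, ∀ x, |f x| ≤ C := by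
  obtain ⟨C, -, hC⟩ := f.decay 0 0
  exact ⟨C, fun x => by simpa using hC x⟩

lemma schwartz_tendsto_top (f : SchwartzMap ℝ ℝ) : Tendsto f atTop (nhds 0) := by
  have := zero_at_infty f
  rw [cocompact_eq_atBot_atTop] at this
  exact this.mono_left le_sup_right

lemma schwartz_tendsto_bot (f : SchwartzMap ℝ ℝ) : Tendsto f atBot (nhds 0) := by
  have := zero_at_infty f
  rw [cocompact_eq_atBot_atTop] at this
  exact this.mono_left le_sup_left

lemma bdd_mul_tendsto {f g : ℝ → ℝ} {l : Filter ℝ} {C : ℝ}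
    (hf : ∀ x, |f x| ≤ C) (hg : Tendsto g l (nhds 0)) :
    Tendsto (fun x => f x * g x) l (nhds 0) := by
  refine squeeze_zero_norm (a := fun x => C * ‖g x‖) (fun x => ?_) ?_
  · rw [norm_mul]
    exact mul_le_mul_of_nonneg_right (by rw [Real.norm_eq_abs]; exact hf x) (norm_nonneg _)
  · simpa using hg.norm.const_mul C

lemma bmul {f g : ℝ → ℝ} {Cf Cg : ℝ} (hf : ∀ x, |f x| ≤ Cf) (hg : ∀ x, |g x| ≤ Cg) :
    ∀ x, |f x * g x| ≤ Cf * Cg := fun x => by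
  rw [abs_mul]
  exact mul_le_mul (hf x) (hg x) (abs_nonneg _) ((abs_nonneg _).trans (hf x))

end DP6

open DP6 in
/-- The quadratic part `3 m u' + m' u` of the Degasperis–Procesi equation does
not contribute to `d/dt ∫ m w dx`: for a Schwartz function `u`, with
`m = u - u''` and `w = p₂ * u` (where `p₂(x) = (1/4)·exp(−2|x|)`), one has
`∫ w (3 m u' + m' u) = 0`. -/
theorem stmt_6 (u : SchwartzMap ℝ ℝ)
    (p₂ : ℝ → ℝ) (hp : ∀ x, p₂ x = (1 / 4) * Real.exp (-2 * |x|))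
    (w : ℝ → ℝ) (hw : ∀ x, w x = ∫ y, p₂ (x - y) * u y)
    (m : ℝ → ℝ) (hm : ∀ x, m x = u x - deriv (deriv (u : ℝ → ℝ)) x) :
    ∫ x, w x * (3 * m x * deriv (u : ℝ → ℝ) x + deriv m x * u x) = 0 := by
  -- Schwartz derivatives of u
  set u1 : SchwartzMap ℝ ℝ := SchwartzMap.derivCLM ℝ ℝ u with hu1
  have e1 : (u1 : ℝ → ℝ) = deriv (u : ℝ → ℝ) :=
    funext fun x => SchwartzMap.derivCLM_apply (𝕜 := ℝ) u x
  set u2 : SchwartzMap ℝ ℝ := SchwartzMap.derivCLM ℝ ℝ u1 with hu2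
  have e2 : (u2 : ℝ → ℝ) = deriv (deriv (u : ℝ → ℝ)) := by
    rw [← e1]; exact funext fun x => SchwartzMap.derivCLM_apply (𝕜 := ℝ) u1 x
  set u3 : SchwartzMap ℝ ℝ := SchwartzMap.derivCLM ℝ ℝ u2 with hu3
  have e3 : (u3 : ℝ → ℝ) = deriv (deriv (deriv (u : ℝ → ℝ))) := by
    rw [← e2]; exact funext fun x => SchwartzMap.derivCLM_apply (𝕜 := ℝ) u2 x
  have hD0 : ∀ x, HasDerivAt (u : ℝ → ℝ) (deriv (u : ℝ → ℝ) x) x :=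
    fun x => u.differentiableAt.hasDerivAt
  have hD1 : ∀ x, HasDerivAt (deriv (u : ℝ → ℝ)) (deriv (deriv (u : ℝ → ℝ)) x) x := by
    intro x
    rw [← e2, ← e1]
    have h := u1.differentiableAt.hasDerivAt (x := x)
    rwa [show deriv (u1 : ℝ → ℝ) x = u2 x from by rw [e2, e1]] at h
  have hD2 : ∀ x, HasDerivAt (deriv (deriv (u : ℝ → ℝ))) (deriv (deriv (deriv (u : ℝ → ℝ))) x) x := by
    intro x
    rw [← e3, ← e2]
    have h := u2.differentiableAt.hasDerivAt (x := x)
    rwa [show deriv (u2 : ℝ → ℝ) x = u3 x from by rw [e3, e2]] at h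
  -- representation of w
  have hweq : w = W u := funext fun x => by
    rw [hw x]
    simp only [hp]
    exact repr u x
  -- derivative of m
  have hdm : ∀ x, deriv m x = deriv (u : ℝ → ℝ) x - deriv (deriv (deriv (u : ℝ → ℝ))) x := by
    intro x
    rw [funext hm]
    exact ((hD0 x).sub (hD2 x)).deriv
  simp only [hweq, hm, hdm]
  -- the primitive G
  set G : ℝ → ℝ := fun x => W1 u x * u x * deriv (u : ℝ → ℝ) x
      - W u x * deriv (u : ℝ → ℝ) x * deriv (u : ℝ → ℝ) x
      - W u x * u x * deriv (deriv (u : ℝ → ℝ)) x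
      + u x * u x * u x / 3 with hGdef
  have hG : ∀ x, HasDerivAt G
      (W u x * (3 * (u x - deriv (deriv (u : ℝ → ℝ)) x) * deriv (u : ℝ → ℝ) x
        + (deriv (u : ℝ → ℝ) x - deriv (deriv (deriv (u : ℝ → ℝ))) x) * u x)) x := by
    intro x
    have h := (((((hasDerivAt_W1 u x).mul (hD0 x)).mul (hD1 x)).sub
        (((hasDerivAt_W u x).mul (hD1 x)).mul (hD1 x))).sub
        (((hasDerivAt_W u x).mul (hD0 x)).mul (hD2 x))).add
        ((((hD0 x).mul (hD0 x)).mul (hD0 x)).div_const 3)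
    refine h.congr_deriv ?_
    simp only [Pi.mul_apply]
    ring
  -- bounds
  obtain ⟨C0, hC0⟩ := schwartz_bound u
  obtain ⟨C1, hC1'⟩ := schwartz_bound u1
  have hC1 : ∀ x, |deriv (u : ℝ → ℝ) x| ≤ C1 := fun x => by rw [← e1]; exact hC1' x
  obtain ⟨C2, hC2'⟩ := schwartz_bound u2
  have hC2 : ∀ x, |deriv (deriv (u : ℝ → ℝ)) x| ≤ C2 := fun x => by rw [← e2]; exact hC2' x
  obtain ⟨C3, hC3'⟩ := schwartz_bound u3
  have hC3 : ∀ x, |deriv (deriv (deriv (u : ℝ → ℝ))) x| ≤ C3 := fun x => by rw [← e3]; exact hC3' x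
  have bW : ∀ x, |W u x| ≤ ∫ y, ‖u y‖ := boundW u
  have bW1 : ∀ x, |W1 u x| ≤ ∫ y, ‖u y‖ := boundW1 u
  -- tendsto of derivatives at infinity
  have tU0top : Tendsto (u : ℝ → ℝ) atTop (nhds 0) := schwartz_tendsto_top u
  have tU0bot : Tendsto (u : ℝ → ℝ) atBot (nhds 0) := schwartz_tendsto_bot u
  have tU1top : Tendsto (deriv (u : ℝ → ℝ)) atTop (nhds 0) := by
    rw [← e1]; exact schwartz_tendsto_top u1
  have tU1bot : Tendsto (deriv (u : ℝ → ℝ)) atBot (nhds 0) := by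
    rw [← e1]; exact schwartz_tendsto_bot u1
  have tU2top : Tendsto (deriv (deriv (u : ℝ → ℝ))) atTop (nhds 0) := by
    rw [← e2]; exact schwartz_tendsto_top u2
  have tU2bot : Tendsto (deriv (deriv (u : ℝ → ℝ))) atBot (nhds 0) := by
    rw [← e2]; exact schwartz_tendsto_bot u2
  -- limits of G
  have tendG : ∀ l : Filter ℝ, Tendsto (u : ℝ → ℝ) l (nhds 0) →
      Tendsto (deriv (u : ℝ → ℝ)) l (nhds 0) →
      Tendsto (deriv (deriv (u : ℝ → ℝ))) l (nhds 0) → Tendsto G l (nhds 0) := by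
    intro l h0 h1 h2
    have t1 : Tendsto (fun x => W1 u x * u x * deriv (u : ℝ → ℝ) x) l (nhds 0) :=
      bdd_mul_tendsto (bmul bW1 hC0) h1
    have t2 : Tendsto (fun x => W u x * deriv (u : ℝ → ℝ) x * deriv (u : ℝ → ℝ) x) l (nhds 0) :=
      bdd_mul_tendsto (bmul bW hC1) h1
    have t3 : Tendsto (fun x => W u x * u x * deriv (deriv (u : ℝ → ℝ)) x) l (nhds 0) :=
      bdd_mul_tendsto (bmul bW hC0) h2
    have t4 : Tendsto (fun x => u x * u x * u x / 3) l (nhds 0) := by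
      have := (bdd_mul_tendsto (bmul hC0 hC0) h0).div_const (3 : ℝ)
      simpa using this
    have := ((t1.sub t2).sub t3).add t4
    simpa using this
  -- integrability of the integrand
  have hdiffW : Differentiable ℝ (W u) := fun x => (hasDerivAt_W u x).differentiableAt
  have hcontW : Continuous (W u) := hdiffW.continuous
  have hbW : ∃ C, ∀ x, ‖W u x‖ ≤ C :=
    ⟨∫ y, ‖u y‖, fun x => by rw [Real.norm_eq_abs]; exact bW x⟩
  have hint1 : Integrable (fun x => (u x - deriv (deriv (u : ℝ → ℝ)) x) * deriv (u : ℝ → ℝ) x) := by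
    refine Integrable.bdd_mul (c := C0 + C2) ?_ ?_ ?_
    · rw [← e1]; exact u1.integrable
    · have : Continuous fun x => u x - deriv (deriv (u : ℝ → ℝ)) x := by
        rw [← e2]; exact u.continuous.sub u2.continuous
      exact this.aestronglyMeasurable
    · refine Eventually.of_forall (p := fun x => ‖_‖ ≤ C0 + C2) fun x => ?_
      rw [Real.norm_eq_abs]
      calc |u x - deriv (deriv (u : ℝ → ℝ)) x| ≤ |u x| + |deriv (deriv (u : ℝ → ℝ)) x| :=
            abs_sub _ _
        _ ≤ C0 + C2 := add_le_add (hC0 x) (hC2 x)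
  have hint2 : Integrable (fun x =>
      (deriv (u : ℝ → ℝ) x - deriv (deriv (deriv (u : ℝ → ℝ))) x) * u x) := by
    refine Integrable.bdd_mul (c := C1 + C3) u.integrable ?_ ?_
    · have : Continuous fun x => deriv (u : ℝ → ℝ) x - deriv (deriv (deriv (u : ℝ → ℝ))) x := by
        rw [← e3, ← e1]; exact u1.continuous.sub u3.continuous
      exact this.aestronglyMeasurable
    · refine Eventually.of_forall (p := fun x => ‖_‖ ≤ C1 + C3) fun x => ?_
      rw [Real.norm_eq_abs]
      calc |deriv (u : ℝ → ℝ) x - deriv (deriv (deriv (u : ℝ → ℝ))) x|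
            ≤ |deriv (u : ℝ → ℝ) x| + |deriv (deriv (deriv (u : ℝ → ℝ))) x| := abs_sub _ _
        _ ≤ C1 + C3 := add_le_add (hC1 x) (hC3 x)
  have hinner : Integrable (fun x =>
      3 * (u x - deriv (deriv (u : ℝ → ℝ)) x) * deriv (u : ℝ → ℝ) x
        + (deriv (u : ℝ → ℝ) x - deriv (deriv (deriv (u : ℝ → ℝ))) x) * u x) := by
    have := (hint1.const_mul 3).add hint2
    simpa only [← mul_assoc, Pi.add_def] using this
  have hF : Integrable (fun x => W u x *
      (3 * (u x - deriv (deriv (u : ℝ → ℝ)) x) * deriv (u : ℝ → ℝ) x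
        + (deriv (u : ℝ → ℝ) x - deriv (deriv (deriv (u : ℝ → ℝ))) x) * u x)) :=
    hinner.bdd_mul hcontW.aestronglyMeasurable (Eventually.of_forall hbW.choose_spec)
  have key := integral_of_hasDerivAt_of_tendsto hG hF
    (tendG atBot tU0bot tU1bot tU2bot) (tendG atTop tU0top tU1top tU2top)
  simpa using key
end

section
/- Let T > 0, let u : [0,T) × ℝ → ℝ be continuously differentiable, and let ρ : [0,T) × ℝ → ℝ be continuously differentiable and satisfy the transport equation ∂ₜρ + u ∂ₓρ + 2 (∂ₓu) ρ = 0 on [0,T) × ℝ. Let q : [0,T) × ℝ → ℝ be continuously differentiable with ∂ₜq(t,x) = u(t, q(t,x)) and q(0,x) = x. Then for all (t,x) ∈ [0,T) × ℝ, ρ(t, q(t,x)) · (∂ₓq(t,x))² = ρ(0,x). -/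
open MeasureTheory Real

private lemma hda_snd {f : ℝ → ℝ → ℝ} (hf : ContDiff ℝ 1 (Function.uncurry f)) (t x : ℝ) :
    HasDerivAt (f t) (fderiv ℝ (Function.uncurry f) (t, x) (0, 1)) x := by
  have h := (hf.differentiable one_ne_zero (t, x)).hasFDerivAt
  have h2 : HasDerivAt (fun y : ℝ => ((t, y) : ℝ × ℝ)) ((0 : ℝ), (1 : ℝ)) x :=
    (hasDerivAt_const x t).prodMk (hasDerivAt_id x)
  exact h.comp_hasDerivAt x h2

private lemma hda_fst {f : ℝ → ℝ → ℝ} (hf : ContDiff ℝ 1 (Function.uncurry f)) (t x : ℝ) :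
    HasDerivAt (fun s => f s x) (fderiv ℝ (Function.uncurry f) (t, x) (1, 0)) t := by
  have h := (hf.differentiable one_ne_zero (t, x)).hasFDerivAt
  have h2 : HasDerivAt (fun s : ℝ => ((s, x) : ℝ × ℝ)) ((1 : ℝ), (0 : ℝ)) t :=
    (hasDerivAt_id t).prodMk (hasDerivAt_const t x)
  exact h.comp_hasDerivAt t h2

private lemma fderiv_pair (L : ℝ × ℝ →L[ℝ] ℝ) (v : ℝ) :
    L (1, v) = L (1, 0) + v * L (0, 1) := by
  have : ((1 : ℝ), v) = (1, 0) + v • ((0 : ℝ), (1 : ℝ)) := by simp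
  rw [this, L.map_add, L.map_smul, smul_eq_mul]

private lemma cont_dirderiv {f : ℝ → ℝ → ℝ} (hf : ContDiff ℝ 1 (Function.uncurry f))
    (v : ℝ × ℝ) :
    Continuous (fun p : ℝ × ℝ => fderiv ℝ (Function.uncurry f) p v) :=
  (hf.continuous_fderiv one_ne_zero).clm_apply continuous_const

/-- Conservation of `ρ qₓ²` along characteristics: if `ρ` solves the transport
equation `∂ₜρ + u ∂ₓρ + 2 (∂ₓu) ρ = 0` and `q` is the flow of `u`, then
`ρ(t, q(t,x)) (∂ₓq(t,x))² = ρ(0,x)` for all `t ∈ [0,T)` and `x ∈ ℝ`. -/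
theorem stmt_9 (T : ℝ) (hT : 0 < T)
    (u ρ q : ℝ → ℝ → ℝ)
    (hu : ContDiff ℝ 1 (Function.uncurry u))
    (hρ : ContDiff ℝ 1 (Function.uncurry ρ))
    (hq : ContDiff ℝ 1 (Function.uncurry q))
    (htransport : ∀ t ∈ Set.Ico (0 : ℝ) T, ∀ x : ℝ,
      deriv (fun s => ρ s x) t + u t x * deriv (ρ t) x
        + 2 * deriv (u t) x * ρ t x = 0)
    (hode : ∀ t ∈ Set.Ico (0 : ℝ) T, ∀ x : ℝ,
      deriv (fun s => q s x) t = u t (q t x))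
    (hq0 : ∀ x : ℝ, q 0 x = x) :
    ∀ t ∈ Set.Ico (0 : ℝ) T, ∀ x : ℝ,
      ρ t (q t x) * (deriv (q t) x) ^ 2 = ρ 0 x := by
  intro t ht x
  -- directional derivative abbreviations
  set qx : ℝ → ℝ → ℝ := fun s y => fderiv ℝ (Function.uncurry q) (s, y) (0, 1) with hqx_def
  set ux : ℝ → ℝ → ℝ := fun s y => fderiv ℝ (Function.uncurry u) (s, y) (0, 1) with hux_def
  have hq_cont : Continuous fun p : ℝ × ℝ => q p.1 p.2 := hq.continuous
  have hqx_cont : Continuous fun p : ℝ × ℝ => qx p.1 p.2 := cont_dirderiv hq (0, 1)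
  have hux_cont : Continuous fun p : ℝ × ℝ => ux p.1 p.2 := cont_dirderiv hu (0, 1)
  have hderiv_q : ∀ s y, deriv (q s) y = qx s y := fun s y => (hda_snd hq s y).deriv
  have hderiv_u : ∀ s y, deriv (u s) y = ux s y := fun s y => (hda_snd hu s y).deriv
  -- the characteristic ODE as HasDerivAt
  have hqode : ∀ s ∈ Set.Ico (0 : ℝ) T, ∀ y : ℝ,
      HasDerivAt (fun r => q r y) (u s (q s y)) s := by
    intro s hs y
    have h := hda_fst hq s y
    have h2 : deriv (fun r => q r y) s = fderiv ℝ (Function.uncurry q) (s, y) (1, 0) := h.deriv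
    rw [hode s hs y] at h2
    rwa [← h2] at h
  -- Step A : integral equation for q
  have stepA : ∀ t' ∈ Set.Ico (0 : ℝ) T, ∀ y : ℝ,
      q t' y = y + ∫ s in (0 : ℝ)..t', u s (q s y) := by
    intro t' ht' y
    have hcont : Continuous fun s => u s (q s y) :=
      hu.continuous.comp (continuous_id.prodMk (hq_cont.comp (continuous_id.prodMk
        continuous_const)))
    set G : ℝ → ℝ := fun s => y + ∫ r in (0 : ℝ)..s, u r (q r y) with hG
    have hGd : ∀ s : ℝ, HasDerivAt G (u s (q s y)) s := by
      intro s
      have := intervalIntegral.integral_hasDerivAt_right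
        (hcont.intervalIntegrable 0 s)
        (hcont.stronglyMeasurableAtFilter _ _) hcont.continuousAt
      exact this.const_add y
    have key := constant_of_has_deriv_right_zero
      (f := fun s => q s y - G s) (a := 0) (b := t')
      (Continuous.continuousOn (by
        exact ((hq_cont.comp (continuous_id.prodMk continuous_const)).sub
          (continuous_const.add (intervalIntegral.continuous_primitive
            (fun a b => hcont.intervalIntegrable a b) 0)))))
      (by
        intro s hs
        have hsT : s ∈ Set.Ico (0 : ℝ) T := ⟨hs.1, lt_of_lt_of_le hs.2 (le_of_lt ht'.2)⟩
        have h1 := (hqode s hsT y).sub (hGd s)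
        simpa [Pi.sub_def] using h1.hasDerivWithinAt)
    have h0 : q 0 y - G 0 = 0 := by simp [hG, hq0 y]
    have hkey : q t' y - G t' = q 0 y - G 0 := key t' (Set.right_mem_Icc.2 ht'.1)
    rw [h0] at hkey
    have := sub_eq_zero.mp hkey
    simpa [hG] using this
  -- Step B : differentiate the integral equation in y
  have stepB : ∀ t' ∈ Set.Ico (0 : ℝ) T,
      deriv (q t') x = 1 + ∫ s in (0 : ℝ)..t', ux s (q s x) * qx s x := by
    intro t' ht'
    -- the pointwise derivative in y
    have hF' : ∀ s y : ℝ, HasDerivAt (fun z => u s (q s z)) (ux s (q s y) * qx s y) y := by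
      intro s y
      have h1 : HasDerivAt (u s) (ux s (q s y)) (q s y) := hda_snd hu s (q s y)
      have h2 : HasDerivAt (q s) (qx s y) y := hda_snd hq s y
      simpa [mul_comm, Function.comp_def] using h1.comp y h2
    have hF'cont : Continuous fun p : ℝ × ℝ => ux p.1 (q p.1 p.2) * qx p.1 p.2 := by
      exact ((hux_cont.comp (continuous_fst.prodMk hq_cont)).mul hqx_cont)
    -- bound on Icc 0 t' × closedBall x 1
    obtain ⟨M, hM⟩ := (((isCompact_Icc (a := (0:ℝ)) (b := t')).prod
      (isCompact_closedBall x 1))).exists_bound_of_continuousOn hF'cont.continuousOn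
    have hint : HasDerivAt (fun y => ∫ s in (0 : ℝ)..t', u s (q s y))
        (∫ s in (0 : ℝ)..t', ux s (q s x) * qx s x) x := by
      have hcont_y : ∀ y : ℝ, Continuous fun s => u s (q s y) := fun y =>
        hu.continuous.comp (continuous_id.prodMk (hq_cont.comp (continuous_id.prodMk
          continuous_const)))
      refine (intervalIntegral.hasDerivAt_integral_of_dominated_loc_of_deriv_le
        (F := fun y s => u s (q s y)) (F' := fun y s => ux s (q s y) * qx s y)
        (bound := fun _ => M) (μ := volume) (a := 0) (b := t') (x₀ := x)
        (s := Metric.ball x 1) (Metric.ball_mem_nhds x one_pos) ?_ ?_ ?_ ?_ ?_ ?_).2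
      · filter_upwards with y using ((hcont_y y).aestronglyMeasurable)
      · exact (hcont_y x).intervalIntegrable 0 t'
      · exact (hF'cont.comp (continuous_id.prodMk continuous_const)).aestronglyMeasurable
      · filter_upwards with s hs y hy
        rw [Set.uIoc_of_le ht'.1] at hs
        exact hM (s, y) ⟨⟨le_of_lt hs.1, hs.2⟩, Metric.ball_subset_closedBall hy⟩
      · exact intervalIntegrable_const
      · filter_upwards with s hs y hy using hF' s y
    have heq : (fun y => q t' y) = fun y => y + ∫ s in (0 : ℝ)..t', u s (q s y) := by
      ext y; exact stepA t' ht' y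
    have : HasDerivAt (q t') (1 + ∫ s in (0 : ℝ)..t', ux s (q s x) * qx s x) x := by
      rw [show q t' = fun y => y + ∫ s in (0 : ℝ)..t', u s (q s y) from heq]
      exact (hasDerivAt_id x).add hint
    exact this.deriv
  -- abbreviations along the characteristic through x
  set c : ℝ → ℝ := fun s => ux s (q s x) with hc_def
  set g : ℝ → ℝ := fun s => c s * qx s x with hg_def
  have hpair : Continuous fun s : ℝ => ((s, x) : ℝ × ℝ) :=
    continuous_id.prodMk continuous_const
  have houter : Continuous fun p : ℝ × ℝ => ux p.1 (q p.1 p.2) :=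
    hux_cont.comp (continuous_fst.prodMk hq_cont)
  have hg_cont : Continuous g := (houter.comp hpair).mul (hqx_cont.comp hpair)
  set W : ℝ → ℝ := fun s => 1 + ∫ r in (0 : ℝ)..s, g r with hW_def
  have hW : ∀ s : ℝ, HasDerivAt W (g s) s := by
    intro s
    have := intervalIntegral.integral_hasDerivAt_right
      (hg_cont.intervalIntegrable 0 s)
      (hg_cont.stronglyMeasurableAtFilter _ _) hg_cont.continuousAt
    exact this.const_add 1
  have hWqx : ∀ s ∈ Set.Ico (0 : ℝ) T, W s = qx s x := by
    intro s hs
    rw [← hderiv_q s x, stepB s hs]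
  -- derivative of a s = ρ s (q s x)
  set a : ℝ → ℝ := fun s => ρ s (q s x) with ha_def
  have ha : ∀ s ∈ Set.Ico (0 : ℝ) T, HasDerivAt a (-2 * c s * a s) s := by
    intro s hs
    have hρF := (hρ.differentiable one_ne_zero (s, q s x)).hasFDerivAt
    have hpath : HasDerivAt (fun r => ((r, q r x) : ℝ × ℝ)) (1, u s (q s x)) s :=
      (hasDerivAt_id s).prodMk (hqode s hs x)
    have hcomp := hρF.comp_hasDerivAt s hpath
    have hval : fderiv ℝ (Function.uncurry ρ) (s, q s x) (1, u s (q s x))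
        = -2 * c s * a s := by
      rw [fderiv_pair]
      have htr := htransport s hs (q s x)
      have h1 : deriv (fun r => ρ r (q s x)) s
          = fderiv ℝ (Function.uncurry ρ) (s, q s x) (1, 0) := (hda_fst hρ s (q s x)).deriv
      have h2 : deriv (ρ s) (q s x)
          = fderiv ℝ (Function.uncurry ρ) (s, q s x) (0, 1) := (hda_snd hρ s (q s x)).deriv
      have h3 : deriv (u s) (q s x) = c s := hderiv_u s (q s x)
      rw [h1, h2, h3] at htr
      have : a s = ρ s (q s x) := rfl
      linarith
    rw [hval] at hcomp
    exact hcomp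
  -- F has zero derivative
  set F : ℝ → ℝ := fun s => a s * (W s) ^ 2 with hF_def
  have hFd : ∀ s ∈ Set.Ico (0 : ℝ) T, HasDerivAt F 0 s := by
    intro s hs
    have h1 := (ha s hs).mul ((hW s).pow 2)
    have hg_val : g s = c s * W s := by rw [hg_def]; simp only; rw [hWqx s hs]
    refine h1.congr_deriv ?_
    rw [hg_val]; simp only [Pi.pow_apply]; push_cast; ring
  -- conclude F is constant on [0, t]
  have hW_cont : Continuous W :=
    Differentiable.continuous fun s => (hW s).differentiableAt
  have ha_cont : Continuous a :=
    hρ.continuous.comp (continuous_id.prodMk (hq_cont.comp (continuous_id.prodMk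
      continuous_const)))
  have hF_cont : Continuous F := ha_cont.mul (hW_cont.pow 2)
  have key := constant_of_has_deriv_right_zero (f := F) (a := 0) (b := t)
    hF_cont.continuousOn
    (fun s hs => (hFd s ⟨hs.1, lt_trans hs.2 ht.2⟩).hasDerivWithinAt)
  have hFt := key t (Set.right_mem_Icc.2 ht.1)
  have hF0 : F 0 = ρ 0 x := by simp [hF_def, ha_def, hW_def, hq0 x]
  have hFt' : F t = ρ t (q t x) * (deriv (q t) x) ^ 2 := by
    rw [hF_def]; simp only; rw [hWqx t ht, hderiv_q t x]
  rw [← hFt', hFt, hF0]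
end

section
/- Let T > 0, M > 0, let u : [0,T) × ℝ → ℝ be continuously differentiable with ∂ₓu(t,x) ≥ −M for all (t,x) ∈ [0,T) × ℝ, and let ρ : [0,T) × ℝ → ℝ be continuously differentiable and satisfy ∂ₜρ + u ∂ₓρ + 2 (∂ₓu) ρ = 0 on [0,T) × ℝ, with ρ(0,·) square integrable. Let q : [0,T) × ℝ → ℝ be continuously differentiable with ∂ₜq(t,x) = u(t, q(t,x)), q(0,x) = x, and suppose that for each t ∈ [0,T) the map q(t,·) : ℝ → ℝ is a C¹ diffeomorphism of ℝ. Then for every t ∈ [0,T), ∫_ℝ ρ(t,x)² dx ≤ e^{3Mt} ∫_ℝ ρ(0,x)² dx. -/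
open MeasureTheory Real Set Function intervalIntegral Topology Filter

namespace Stmt12Aux


lemma hasDerivAt_uncurry_snd {f : ℝ → ℝ → ℝ} (hf : ContDiff ℝ 1 (uncurry f)) (t x : ℝ) :
    HasDerivAt (f t) (fderiv ℝ (uncurry f) (t, x) (0, 1)) x := by
  have H : HasFDerivAt (uncurry f) (fderiv ℝ (uncurry f) (t, x)) (t, x) :=
    (hf.differentiable one_ne_zero (t, x)).hasFDerivAt
  have h2 : HasDerivAt (fun y : ℝ => ((t, y) : ℝ × ℝ)) ((0 : ℝ), (1 : ℝ)) x :=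
    (hasDerivAt_const x t).prodMk (hasDerivAt_id x)
  exact H.comp_hasDerivAt x h2

lemma hasDerivAt_uncurry_fst {f : ℝ → ℝ → ℝ} (hf : ContDiff ℝ 1 (uncurry f)) (t x : ℝ) :
    HasDerivAt (fun s => f s x) (fderiv ℝ (uncurry f) (t, x) (1, 0)) t := by
  have H : HasFDerivAt (uncurry f) (fderiv ℝ (uncurry f) (t, x)) (t, x) :=
    (hf.differentiable one_ne_zero (t, x)).hasFDerivAt
  have h2 : HasDerivAt (fun s : ℝ => ((s, x) : ℝ × ℝ)) ((1 : ℝ), (0 : ℝ)) t :=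
    (hasDerivAt_id t).prodMk (hasDerivAt_const t x)
  exact H.comp_hasDerivAt t h2

lemma continuous_partial_snd {f : ℝ → ℝ → ℝ} (hf : ContDiff ℝ 1 (uncurry f)) :
    Continuous (fun p : ℝ × ℝ => deriv (f p.1) p.2) := by
  have h : (fun p : ℝ × ℝ => deriv (f p.1) p.2)
      = fun p : ℝ × ℝ => fderiv ℝ (uncurry f) p ((0 : ℝ), (1 : ℝ)) := by
    funext p
    obtain ⟨t, x⟩ := p
    exact (hasDerivAt_uncurry_snd hf t x).deriv
  rw [h]
  exact (hf.continuous_fderiv one_ne_zero).clm_apply continuous_const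

lemma const_of_hasDerivAt_zero {g : ℝ → ℝ} {t : ℝ} (ht : 0 ≤ t)
    (h : ∀ s ∈ Icc (0 : ℝ) t, HasDerivAt g 0 s) : g t = g 0 :=
  constant_of_has_deriv_right_zero
    (fun s hs => ((h s hs).continuousAt.continuousWithinAt))
    (fun s hs => ((h s ⟨hs.1, hs.2.le⟩).hasDerivWithinAt))
    t (right_mem_Icc.2 ht)

lemma ftc_cont {f : ℝ → ℝ} (hf : Continuous f) (a b : ℝ) :
    HasDerivAt (fun u => ∫ x in a..u, f x) (f b) b :=
  integral_hasDerivAt_right (hf.intervalIntegrable _ _)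
    hf.stronglyMeasurable.stronglyMeasurableAtFilter hf.continuousAt

lemma transport_sol
    {T : ℝ} {u ρ q : ℝ → ℝ → ℝ}
    (hu : ContDiff ℝ 1 (uncurry u)) (hρ : ContDiff ℝ 1 (uncurry ρ))
    (hq : ContDiff ℝ 1 (uncurry q))
    (htransport : ∀ t ∈ Ico (0 : ℝ) T, ∀ x : ℝ,
      deriv (fun s => ρ s x) t + u t x * deriv (ρ t) x + 2 * deriv (u t) x * ρ t x = 0)
    (hode : ∀ t ∈ Ico (0 : ℝ) T, ∀ x : ℝ, deriv (fun s => q s x) t = u t (q t x))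
    (hq0 : ∀ x : ℝ, q 0 x = x)
    {t : ℝ} (ht : t ∈ Ico (0 : ℝ) T) (x : ℝ) :
    ρ t (q t x) = ρ 0 x * Real.exp (-(2 * ∫ s in (0 : ℝ)..t, deriv (u s) (q s x))) := by
  obtain ⟨ht0, htT⟩ := ht
  have hflow : ∀ s ∈ Ico (0 : ℝ) T, HasDerivAt (fun τ => q τ x) (u s (q s x)) s := by
    intro s hs
    have h := (hasDerivAt_uncurry_fst hq s x).differentiableAt.hasDerivAt
    rwa [hode s hs x] at h
  set a : ℝ → ℝ := fun s => deriv (u s) (q s x) with ha_def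
  have ha_cont : Continuous a := (continuous_partial_snd hu).comp
    (continuous_id.prodMk (hq.continuous.comp (continuous_id.prodMk continuous_const)))
  set A : ℝ → ℝ := fun τ => ∫ s in (0 : ℝ)..τ, a s with hA
  have hA_der : ∀ τ, HasDerivAt A (a τ) τ := fun τ => ftc_cont ha_cont 0 τ
  have hh : ∀ σ ∈ Ico (0 : ℝ) T,
      HasDerivAt (fun τ => ρ τ (q τ x)) (-(2 * a σ * ρ σ (q σ x))) σ := by
    intro σ hσ
    have hin : HasDerivAt (fun τ => ((τ, q τ x) : ℝ × ℝ)) ((1 : ℝ), u σ (q σ x)) σ :=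
      (hasDerivAt_id σ).prodMk (hflow σ hσ)
    have H : HasFDerivAt (uncurry ρ) (fderiv ℝ (uncurry ρ) (σ, q σ x)) (σ, q σ x) :=
      (hρ.differentiable one_ne_zero _).hasFDerivAt
    have hcomp := H.comp_hasDerivAt σ hin
    have hsplit : fderiv ℝ (uncurry ρ) (σ, q σ x) ((1 : ℝ), u σ (q σ x))
        = deriv (fun s => ρ s (q σ x)) σ + u σ (q σ x) * deriv (ρ σ) (q σ x) := by
      have e1 : ((1 : ℝ), u σ (q σ x)) = ((1 : ℝ), (0 : ℝ))
          + u σ (q σ x) • ((0 : ℝ), (1 : ℝ)) := by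
        simp [Prod.ext_iff]
      rw [e1, map_add, ContinuousLinearMap.map_smul,
        ← (hasDerivAt_uncurry_fst hρ σ (q σ x)).deriv,
        ← (hasDerivAt_uncurry_snd hρ σ (q σ x)).deriv]
      simp [smul_eq_mul]
    rw [hsplit] at hcomp
    have htr := htransport σ hσ (q σ x)
    have hval : deriv (fun s => ρ s (q σ x)) σ + u σ (q σ x) * deriv (ρ σ) (q σ x)
        = -(2 * a σ * ρ σ (q σ x)) := by
      rw [ha_def]
      linarith
    rwa [hval] at hcomp
  have key : ∀ σ ∈ Icc (0 : ℝ) t,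
      HasDerivAt (fun τ => ρ τ (q τ x) * Real.exp (2 * A τ)) 0 σ := by
    intro σ hσ
    have hσT : σ ∈ Ico (0 : ℝ) T := ⟨hσ.1, lt_of_le_of_lt hσ.2 htT⟩
    have h1 : HasDerivAt (fun τ => Real.exp (2 * A τ)) (Real.exp (2 * A σ) * (2 * a σ)) σ :=
      ((hA_der σ).const_mul 2).exp
    have h2 := (hh σ hσT).mul h1
    have hval : -(2 * a σ * ρ σ (q σ x)) * Real.exp (2 * A σ)
        + ρ σ (q σ x) * (Real.exp (2 * A σ) * (2 * a σ)) = 0 := by ring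
    rwa [hval] at h2
  have hfin := const_of_hasDerivAt_zero ht0 key
  have hA0 : A 0 = 0 := by simp [hA]
  rw [hq0 x, hA0] at hfin
  simp only [mul_zero, Real.exp_zero, mul_one] at hfin
  show ρ t (q t x) = ρ 0 x * Real.exp (-(2 * A t))
  calc ρ t (q t x) = ρ t (q t x) * Real.exp (2 * A t) * Real.exp (-(2 * A t)) := by
        rw [mul_assoc, ← Real.exp_add]; simp
    _ = ρ 0 x * Real.exp (-(2 * A t)) := by rw [hfin]

lemma flow_deriv_eq_exp
    {T : ℝ} {u q : ℝ → ℝ → ℝ}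
    (hu : ContDiff ℝ 1 (uncurry u)) (hq : ContDiff ℝ 1 (uncurry q))
    (hode : ∀ t ∈ Ico (0 : ℝ) T, ∀ x : ℝ, deriv (fun s => q s x) t = u t (q t x))
    (hq0 : ∀ x : ℝ, q 0 x = x)
    (hinj : ∀ t ∈ Ico (0 : ℝ) T, Function.Injective (q t))
    {t : ℝ} (ht : t ∈ Ico (0 : ℝ) T) (x : ℝ) :
    deriv (q t) x = Real.exp (∫ s in (0 : ℝ)..t, deriv (u s) (q s x)) := by
  obtain ⟨ht0, htT⟩ := ht
  have hqx : ∀ s y, HasDerivAt (q s) (deriv (q s) y) y := fun s y =>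
    (hasDerivAt_uncurry_snd hq s y).differentiableAt.hasDerivAt
  have hD_cont : Continuous fun p : ℝ × ℝ => deriv (q p.1) p.2 := continuous_partial_snd hq
  have hux_cont : Continuous fun p : ℝ × ℝ => deriv (u p.1) p.2 := continuous_partial_snd hu
  have hqc : Continuous (uncurry q) := hq.continuous
  have hqy_cont : ∀ y, Continuous fun s => q s y := fun y =>
    hqc.comp (continuous_id.prodMk continuous_const)
  have huu : ∀ y, Continuous fun s => u s (q s y) := fun y =>
    hu.continuous.comp (continuous_id.prodMk (hqy_cont y))
  have hflow : ∀ y, ∀ s ∈ Ico (0 : ℝ) T, HasDerivAt (fun τ => q τ y) (u s (q s y)) s := by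
    intro y s hs
    have h := (hasDerivAt_uncurry_fst hq s y).differentiableAt.hasDerivAt
    rwa [hode s hs y] at h
  have hqint : ∀ y, ∀ τ ∈ Icc (0 : ℝ) t, q τ y = y + ∫ s in (0 : ℝ)..τ, u s (q s y) := by
    intro y τ hτ
    have key : (fun σ => q σ y - ∫ s in (0 : ℝ)..σ, u s (q s y)) τ
        = (fun σ => q σ y - ∫ s in (0 : ℝ)..σ, u s (q s y)) 0 := by
      apply const_of_hasDerivAt_zero hτ.1
      intro s hs
      have h1 := hflow y s ⟨hs.1, lt_of_le_of_lt (hs.2.trans hτ.2) htT⟩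
      have h2 := ftc_cont (huu y) 0 s
      exact (h1.sub h2).congr_deriv (sub_self _)
    simp only [intervalIntegral.integral_same, sub_zero, hq0 y] at key
    linarith [key]
  set a : ℝ → ℝ := fun s => deriv (u s) (q s x) with ha_def
  have ha_cont : Continuous a := hux_cont.comp (continuous_id.prodMk (hqy_cont x))
  have haD_cont : Continuous fun s => a s * deriv (q s) x :=
    ha_cont.mul (hD_cont.comp (continuous_id.prodMk continuous_const))
  have hxK : x ∈ Icc (x - 1) (x + 1) := ⟨by linarith, by linarith⟩
  have hDint : ∀ τ ∈ Icc (0 : ℝ) t,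
      deriv (q τ) x = 1 + ∫ s in (0 : ℝ)..τ, a s * deriv (q s) x := by
    intro τ hτ
    have hτT : τ < T := lt_of_le_of_lt hτ.2 htT
    obtain ⟨C1, hC1⟩ := ((isCompact_Icc (a := (0 : ℝ)) (b := τ)).prod
      (isCompact_Icc (a := x - 1) (b := x + 1))).exists_bound_of_continuousOn hD_cont.continuousOn
    obtain ⟨C0, hC0⟩ := ((isCompact_Icc (a := (0 : ℝ)) (b := τ)).prod
      (isCompact_Icc (a := x - 1) (b := x + 1))).exists_bound_of_continuousOn hqc.continuousOn
    obtain ⟨C2, hC2⟩ := ((isCompact_Icc (a := (0 : ℝ)) (b := τ)).prod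
      (isCompact_Icc (a := -C0) (b := C0))).exists_bound_of_continuousOn hux_cont.continuousOn
    have hqK : ∀ s ∈ Icc (0 : ℝ) τ, ∀ y ∈ Icc (x - 1) (x + 1), q s y ∈ Icc (-C0) C0 := by
      intro s hs y hy
      have h := hC0 (s, y) ⟨hs, hy⟩
      rw [Real.norm_eq_abs] at h
      exact Set.mem_Icc.2 (abs_le.1 h)
    have hC1nn : 0 ≤ C1 := (norm_nonneg _).trans (hC1 (0, x) ⟨⟨le_rfl, hτ.1⟩, hxK⟩)
    have hC2nn : 0 ≤ C2 :=
      (norm_nonneg _).trans (hC2 (0, q 0 x) ⟨⟨le_rfl, hτ.1⟩, hqK 0 ⟨le_rfl, hτ.1⟩ x hxK⟩)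
    have hstep1 : ∀ s ∈ Icc (0 : ℝ) τ, ∀ y ∈ Icc (x - 1) (x + 1),
        |q s y - q s x| ≤ C1 * |y - x| := by
      intro s hs y hy
      have := (convex_Icc (x - 1) (x + 1)).norm_image_sub_le_of_norm_hasDerivWithin_le
        (f := q s) (f' := fun z => deriv (q s) z)
        (fun z _ => (hqx s z).hasDerivWithinAt)
        (fun z hz => hC1 (s, z) ⟨hs, hz⟩) hxK hy
      simpa [Real.norm_eq_abs] using this
    have hstep2 : ∀ s ∈ Icc (0 : ℝ) τ, ∀ y ∈ Icc (x - 1) (x + 1),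
        |u s (q s y) - u s (q s x)| ≤ C2 * |q s y - q s x| := by
      intro s hs y hy
      have := (convex_Icc (-C0) C0).norm_image_sub_le_of_norm_hasDerivWithin_le
        (f := u s) (f' := fun z => deriv (u s) z)
        (fun z _ => ((hasDerivAt_uncurry_snd hu s z).differentiableAt.hasDerivAt).hasDerivWithinAt)
        (fun z hz => hC2 (s, z) ⟨hs, hz⟩) (hqK s hs x hxK) (hqK s hs y hy)
      simpa [Real.norm_eq_abs] using this
    have hmemK : ∀ᶠ y in 𝓝[≠] x, y ∈ Icc (x - 1) (x + 1) :=
      Filter.Eventually.filter_mono nhdsWithin_le_nhds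
        (Filter.eventually_of_mem (Icc_mem_nhds (by linarith) (by linarith)) fun y hy => hy)
    have hne : ∀ᶠ y in 𝓝[≠] x, y ≠ x :=
      eventually_mem_nhdsWithin.mono fun y hy => hy
    have hΙ : Set.uIoc (0 : ℝ) τ = Ioc 0 τ := Set.uIoc_of_le hτ.1
    have hFcont : ∀ y : ℝ, Continuous fun s => (u s (q s y) - u s (q s x)) / (y - x) :=
      fun y => ((huu y).sub (huu x)).div_const (y - x)
    have hDCT : Filter.Tendsto
        (fun y => ∫ s in (0 : ℝ)..τ, (u s (q s y) - u s (q s x)) / (y - x)) (𝓝[≠] x)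
        (𝓝 (∫ s in (0 : ℝ)..τ, a s * deriv (q s) x)) := by
      apply intervalIntegral.tendsto_integral_filter_of_dominated_convergence
        (bound := fun _ => C2 * (C1 * 1))
      · exact Filter.Eventually.of_forall fun y =>
          (hFcont y).aestronglyMeasurable.restrict
      · filter_upwards [hmemK, hne] with y hyK hyx
        refine Filter.Eventually.of_forall fun s hs => ?_
        rw [hΙ] at hs
        have hs' : s ∈ Icc (0 : ℝ) τ := Ioc_subset_Icc_self hs
        have h1 := hstep1 s hs' y hyK
        have h2 := hstep2 s hs' y hyK
        have hy0 : (0 : ℝ) < |y - x| := abs_pos.2 (sub_ne_zero.2 hyx)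
        rw [Real.norm_eq_abs, abs_div, div_le_iff₀ hy0]
        calc |u s (q s y) - u s (q s x)| ≤ C2 * (C1 * |y - x|) :=
              h2.trans (mul_le_mul_of_nonneg_left h1 hC2nn)
          _ = C2 * (C1 * 1) * |y - x| := by ring
      · exact intervalIntegrable_const
      · refine Filter.Eventually.of_forall fun s hs => ?_
        rw [hΙ] at hs
        have hs' : s ∈ Icc (0 : ℝ) τ := Ioc_subset_Icc_self hs
        have hsT : s ∈ Ico (0 : ℝ) T := ⟨hs'.1, lt_of_le_of_lt hs'.2 hτT⟩
        have hu_der : HasDerivAt (u s) (deriv (u s) (q s x)) (q s x) :=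
          (hasDerivAt_uncurry_snd hu s (q s x)).differentiableAt.hasDerivAt
        have t1 : Filter.Tendsto (fun y => q s y) (𝓝[≠] x) (𝓝[≠] (q s x)) := by
          rw [tendsto_nhdsWithin_iff]
          constructor
          · exact ((hqc.comp (continuous_const.prodMk continuous_id)).tendsto x).mono_left
              nhdsWithin_le_nhds
          · exact hne.mono fun y hy =>
              Set.mem_compl_singleton_iff.2 fun hEq => hy (hinj s hsT hEq)
        have T1 : Filter.Tendsto (fun y => slope (u s) (q s x) (q s y)) (𝓝[≠] x)
            (𝓝 (a s)) := (hasDerivAt_iff_tendsto_slope.1 hu_der).comp t1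
        have T2 : Filter.Tendsto (fun y => slope (q s) x y) (𝓝[≠] x)
            (𝓝 (deriv (q s) x)) := hasDerivAt_iff_tendsto_slope.1 (hqx s x)
        refine (T1.mul T2).congr' ?_
        filter_upwards [hne] with y hy
        have hqne : q s y - q s x ≠ 0 := sub_ne_zero.2 fun h => hy (hinj s hsT h)
        rw [slope_def_field, slope_def_field, div_mul_div_cancel₀ hqne]
    have hslope_eq : ∀ᶠ y in 𝓝[≠] x,
        slope (q τ) x y = 1 + ∫ s in (0 : ℝ)..τ, (u s (q s y) - u s (q s x)) / (y - x) := by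
      filter_upwards [hne] with y hy
      have e1 := hqint y τ hτ
      have e2 := hqint x τ hτ
      have hsub : q τ y - q τ x
          = (y - x) + ∫ s in (0 : ℝ)..τ, (u s (q s y) - u s (q s x)) := by
        rw [intervalIntegral.integral_sub ((huu y).intervalIntegrable _ _)
          ((huu x).intervalIntegrable _ _), e1, e2]
        ring
      rw [slope_def_field, hsub, intervalIntegral.integral_div, add_div,
        div_self (sub_ne_zero.2 hy)]
    have hslopetend : Filter.Tendsto (slope (q τ) x) (𝓝[≠] x) (𝓝 (deriv (q τ) x)) :=
      hasDerivAt_iff_tendsto_slope.1 (hqx τ x)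
    have htend2 : Filter.Tendsto (slope (q τ) x) (𝓝[≠] x)
        (𝓝 (1 + ∫ s in (0 : ℝ)..τ, a s * deriv (q s) x)) :=
      (Filter.Tendsto.const_add 1 hDCT).congr' (hslope_eq.mono fun y hy => hy.symm)
    exact tendsto_nhds_unique hslopetend htend2
  -- solve the linear integral equation
  set A : ℝ → ℝ := fun τ => ∫ s in (0 : ℝ)..τ, a s with hA
  have hA_der : ∀ τ, HasDerivAt A (a τ) τ := fun τ => ftc_cont ha_cont 0 τ
  set R : ℝ → ℝ := fun τ => 1 + ∫ s in (0 : ℝ)..τ, a s * deriv (q s) x with hR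
  have hR_der : ∀ τ, HasDerivAt R (a τ * deriv (q τ) x) τ := fun τ =>
    (ftc_cont haD_cont 0 τ).const_add 1
  have key : ∀ τ ∈ Icc (0 : ℝ) t, HasDerivAt (fun σ => R σ * Real.exp (-A σ)) 0 τ := by
    intro τ hτ
    have h1 : HasDerivAt (fun σ => Real.exp (-A σ)) (Real.exp (-A τ) * -a τ) τ :=
      ((hA_der τ).neg).exp
    have h2 := (hR_der τ).mul h1
    have hval : a τ * deriv (q τ) x * Real.exp (-A τ) + R τ * (Real.exp (-A τ) * -a τ) = 0 := by
      rw [show R τ = deriv (q τ) x from (hDint τ hτ).symm]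
      ring
    rwa [hval] at h2
  have hfin : R t * Real.exp (-A t) = R 0 * Real.exp (-A 0) := const_of_hasDerivAt_zero ht0 key
  have hR0 : R 0 = 1 := by simp [hR]
  have hA0 : A 0 = 0 := by simp [hA]
  rw [hR0, hA0] at hfin
  simp only [neg_zero, Real.exp_zero, one_mul, mul_one] at hfin
  have hDt := hDint t (right_mem_Icc.2 ht0)
  rw [hDt]
  calc R t = R t * Real.exp (-A t) * Real.exp (A t) := by
        rw [mul_assoc, ← Real.exp_add]; simp
    _ = Real.exp (A t) := by rw [hfin, one_mul]


end Stmt12Aux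

/-- The `L²` a priori estimate for `ρ`: if `∂ₓu ≥ −M` on `[0,T) × ℝ`, `ρ`
solves `∂ₜρ + u ∂ₓρ + 2 (∂ₓu) ρ = 0` with `ρ(0,·)` square integrable, and `q`
is the flow of `u` with `q(t,·)` a `C¹` diffeomorphism of `ℝ` for each `t`,
then `∫ ρ(t)² ≤ e^{3Mt} ∫ ρ(0)²`. -/
theorem stmt_12 (T M : ℝ) (hT : 0 < T) (hM : 0 < M)
    (u ρ q : ℝ → ℝ → ℝ)
    (hu : ContDiff ℝ 1 (Function.uncurry u))
    (hux : ∀ t ∈ Set.Ico (0 : ℝ) T, ∀ x : ℝ, deriv (u t) x ≥ -M)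
    (hρ : ContDiff ℝ 1 (Function.uncurry ρ))
    (htransport : ∀ t ∈ Set.Ico (0 : ℝ) T, ∀ x : ℝ,
      deriv (fun s => ρ s x) t + u t x * deriv (ρ t) x
        + 2 * deriv (u t) x * ρ t x = 0)
    (hρ0 : Integrable (fun x => (ρ 0 x) ^ 2))
    (hq : ContDiff ℝ 1 (Function.uncurry q))
    (hode : ∀ t ∈ Set.Ico (0 : ℝ) T, ∀ x : ℝ,
      deriv (fun s => q s x) t = u t (q t x))
    (hq0 : ∀ x : ℝ, q 0 x = x)
    (hdiffeo : ∀ t ∈ Set.Ico (0 : ℝ) T,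
      Function.Bijective (q t) ∧ ContDiff ℝ 1 (Function.invFun (q t))) :
    ∀ t ∈ Set.Ico (0 : ℝ) T,
      ∫ x, (ρ t x) ^ 2 ≤ Real.exp (3 * M * t) * ∫ x, (ρ 0 x) ^ 2 := by
  intro t ht
  obtain ⟨ht0, htT⟩ := ht
  have hinj : ∀ s ∈ Set.Ico (0 : ℝ) T, Function.Injective (q s) :=
    fun s hs => (hdiffeo s hs).1.injective
  set A : ℝ → ℝ := fun x => ∫ s in (0 : ℝ)..t, deriv (u s) (q s x) with hAdef
  have hDq : ∀ x, deriv (q t) x = Real.exp (A x) := fun x =>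
    Stmt12Aux.flow_deriv_eq_exp hu hq hode hq0 hinj ⟨ht0, htT⟩ x
  have hρq : ∀ x, ρ t (q t x) = ρ 0 x * Real.exp (-(2 * A x)) := fun x =>
    Stmt12Aux.transport_sol hu hρ hq htransport hode hq0 ⟨ht0, htT⟩ x
  have ha_cont : ∀ x : ℝ, Continuous fun s => deriv (u s) (q s x) := fun x =>
    (Stmt12Aux.continuous_partial_snd hu).comp
      (continuous_id.prodMk (hq.continuous.comp (continuous_id.prodMk continuous_const)))
  have hAlb : ∀ x, -(M * t) ≤ A x := by
    intro x
    have h : ∫ _ in (0 : ℝ)..t, (-M) ≤ ∫ s in (0 : ℝ)..t, deriv (u s) (q s x) := by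
      apply intervalIntegral.integral_mono_on ht0 intervalIntegrable_const
        ((ha_cont x).intervalIntegrable _ _)
      intro s hs
      exact hux s ⟨hs.1, lt_of_le_of_lt hs.2 htT⟩ (q s x)
    simp only [intervalIntegral.integral_const, smul_eq_mul, sub_zero] at h
    have : -(M * t) = t * (-M) := by ring
    rw [this]
    exact h
  have hqderiv : ∀ x : ℝ, HasDerivAt (q t) (deriv (q t) x) x := fun x =>
    (Stmt12Aux.hasDerivAt_uncurry_snd hq t x).differentiableAt.hasDerivAt
  have himg : q t '' Set.univ = Set.univ := by
    rw [Set.image_univ, (hdiffeo t ⟨ht0, htT⟩).1.surjective.range_eq]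
  have hCV : ∫ y, (ρ t y) ^ 2 = ∫ x, |deriv (q t) x| • (ρ t (q t x)) ^ 2 := by
    have h := integral_image_eq_integral_abs_deriv_smul (s := Set.univ) MeasurableSet.univ
      (fun x _ => (hqderiv x).hasDerivWithinAt)
      ((hinj t ⟨ht0, htT⟩).injOn) (fun y => (ρ t y) ^ 2)
    rw [himg] at h
    simpa using h
  have hpt : ∀ x, |deriv (q t) x| • (ρ t (q t x)) ^ 2
      ≤ Real.exp (3 * M * t) * (ρ 0 x) ^ 2 := by
    intro x
    rw [hDq x, hρq x, abs_of_pos (Real.exp_pos _), smul_eq_mul]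
    have e : Real.exp (A x) * (ρ 0 x * Real.exp (-(2 * A x))) ^ 2
        = (ρ 0 x) ^ 2 * Real.exp (-(3 * A x)) := by
      calc Real.exp (A x) * (ρ 0 x * Real.exp (-(2 * A x))) ^ 2
          = (ρ 0 x) ^ 2 * (Real.exp (A x)
              * (Real.exp (-(2 * A x)) * Real.exp (-(2 * A x)))) := by ring
        _ = (ρ 0 x) ^ 2 * Real.exp (A x + (-(2 * A x) + -(2 * A x))) := by
              rw [← Real.exp_add, ← Real.exp_add]
        _ = (ρ 0 x) ^ 2 * Real.exp (-(3 * A x)) := by ring_nf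
    rw [e]
    calc (ρ 0 x) ^ 2 * Real.exp (-(3 * A x))
        ≤ (ρ 0 x) ^ 2 * Real.exp (3 * M * t) := by
          apply mul_le_mul_of_nonneg_left _ (sq_nonneg _)
          apply Real.exp_le_exp.2
          have := hAlb x
          linarith
      _ = Real.exp (3 * M * t) * (ρ 0 x) ^ 2 := mul_comm _ _
  rw [hCV]
  calc ∫ x, |deriv (q t) x| • (ρ t (q t x)) ^ 2
      ≤ ∫ x, Real.exp (3 * M * t) * (ρ 0 x) ^ 2 := by
        apply integral_mono_of_nonneg
        · exact Filter.Eventually.of_forall fun x =>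
            smul_nonneg (abs_nonneg _) (sq_nonneg _)
        · exact hρ0.const_mul _
        · exact Filter.Eventually.of_forall hpt
    _ = Real.exp (3 * M * t) * ∫ x, (ρ 0 x) ^ 2 := MeasureTheory.integral_const_mul _ _
end

section
/- Let T > 0, let u : [0,T) × ℝ → ℝ be twice continuously differentiable, and let ρ : [0,T) × ℝ → ℝ be twice continuously differentiable and satisfy ∂ₜρ + u ∂ₓρ + 2 (∂ₓu) ρ = 0 on [0,T) × ℝ. Let q : [0,T) × ℝ → ℝ be continuously differentiable with ∂ₜq(t,x) = u(t, q(t,x)) and q(0,x) = x. Suppose x₀ ∈ ℝ is such that ∂ₓ²u(t, q(t,x₀)) = 0 for almost every t ∈ [0,T). Then for all t ∈ [0,T), ∂ₓρ(t, q(t,x₀)) = ∂ₓρ(0, x₀) · exp( −3 ∫₀ᵗ ∂ₓu(s, q(s,x₀)) ds ). -/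
open MeasureTheory Real

lemma hasDerivAt_partial_snd {F : ℝ × ℝ → ℝ} {t x : ℝ}
    (hF : DifferentiableAt ℝ F (t, x)) :
    HasDerivAt (fun y => F (t, y)) (fderiv ℝ F (t, x) (0, 1)) x := by
  have h1 : HasDerivAt (fun y : ℝ => ((t : ℝ), y)) ((0 : ℝ), (1 : ℝ)) x :=
    (hasDerivAt_const x t).prodMk (hasDerivAt_id x)
  exact hF.hasFDerivAt.comp_hasDerivAt x h1

lemma hasDerivAt_partial_fst {F : ℝ × ℝ → ℝ} {t x : ℝ}
    (hF : DifferentiableAt ℝ F (t, x)) :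
    HasDerivAt (fun s => F (s, x)) (fderiv ℝ F (t, x) (1, 0)) t := by
  have h1 : HasDerivAt (fun s : ℝ => (s, (x : ℝ))) ((1 : ℝ), (0 : ℝ)) t :=
    (hasDerivAt_id t).prodMk (hasDerivAt_const t x)
  exact hF.hasFDerivAt.comp_hasDerivAt t h1

lemma fderiv_fderiv_apply {G : ℝ × ℝ → ℝ} {p : ℝ × ℝ}
    (hD : DifferentiableAt ℝ (fderiv ℝ G) p) (v w : ℝ × ℝ) :
    fderiv ℝ (fun q => fderiv ℝ G q w) p v = fderiv ℝ (fderiv ℝ G) p v w := by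
  have h := ((ContinuousLinearMap.apply ℝ ℝ w).hasFDerivAt
      (x := fderiv ℝ G p)).comp p hD.hasFDerivAt
  have h2 : fderiv ℝ (fun q => fderiv ℝ G q w) p
      = (ContinuousLinearMap.apply ℝ ℝ w).comp (fderiv ℝ (fderiv ℝ G) p) := h.fderiv
  rw [h2]; rfl

/-- Exponential formula for the slope `∂ₓρ` along a trajectory on which `∂ₓ²u`
vanishes: if `ρ` solves `∂ₜρ + u ∂ₓρ + 2 (∂ₓu) ρ = 0`, `q` is the flow of `u`,
and `∂ₓ²u(t, q(t,x₀)) = 0` for a.e. `t ∈ [0,T)`, then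
`∂ₓρ(t, q(t,x₀)) = ∂ₓρ(0,x₀) · exp(−3 ∫₀ᵗ ∂ₓu(s, q(s,x₀)) ds)`. -/
theorem stmt_14 (T : ℝ) (hT : 0 < T)
    (u ρ q : ℝ → ℝ → ℝ)
    (hu : ContDiff ℝ 2 (Function.uncurry u))
    (hρ : ContDiff ℝ 2 (Function.uncurry ρ))
    (htransport : ∀ t ∈ Set.Ico (0 : ℝ) T, ∀ x : ℝ,
      deriv (fun s => ρ s x) t + u t x * deriv (ρ t) x
        + 2 * deriv (u t) x * ρ t x = 0)
    (hq : ContDiff ℝ 1 (Function.uncurry q))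
    (hode : ∀ t ∈ Set.Ico (0 : ℝ) T, ∀ x : ℝ,
      deriv (fun s => q s x) t = u t (q t x))
    (hq0 : ∀ x : ℝ, q 0 x = x)
    (x₀ : ℝ)
    (hx₀ : ∀ᵐ t ∂ (volume.restrict (Set.Ico (0 : ℝ) T)),
      deriv (deriv (u t)) (q t x₀) = 0) :
    ∀ t ∈ Set.Ico (0 : ℝ) T,
      deriv (ρ t) (q t x₀)
        = deriv (ρ 0) x₀ * Real.exp (-3 * ∫ s in (0 : ℝ)..t, deriv (u s) (q s x₀)) := by
  set U := Function.uncurry u with hUdef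
  set R := Function.uncurry ρ with hRdef
  have huD : Differentiable ℝ U := hu.differentiable (by norm_num)
  have hρD : Differentiable ℝ R := hρ.differentiable (by norm_num)
  have hu1 : ContDiff ℝ 1 (fderiv ℝ U) := hu.fderiv_right (by norm_num)
  have hρ1 : ContDiff ℝ 1 (fderiv ℝ R) := hρ.fderiv_right (by norm_num)
  -- first partials as C¹ maps
  have hdu1 : ContDiff ℝ 1 (fun p : ℝ × ℝ => fderiv ℝ U p (0, 1)) :=
    hu1.clm_apply contDiff_const
  have hdρ1 : ContDiff ℝ 1 (fun p : ℝ × ℝ => fderiv ℝ R p (0, 1)) :=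
    hρ1.clm_apply contDiff_const
  have hdtρ1 : ContDiff ℝ 1 (fun p : ℝ × ℝ => fderiv ℝ R p (1, 0)) :=
    hρ1.clm_apply contDiff_const
  -- partial derivative identities
  have hux : ∀ t x : ℝ, HasDerivAt (u t) (fderiv ℝ U (t, x) (0, 1)) x := by
    intro t x
    have := hasDerivAt_partial_snd (huD (t, x))
    simpa [hUdef, Function.uncurry] using this
  have hρx : ∀ t x : ℝ, HasDerivAt (ρ t) (fderiv ℝ R (t, x) (0, 1)) x := by
    intro t x
    have := hasDerivAt_partial_snd (hρD (t, x))
    simpa [hRdef, Function.uncurry] using this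
  have hρt : ∀ t x : ℝ, HasDerivAt (fun s => ρ s x) (fderiv ℝ R (t, x) (1, 0)) t := by
    intro t x
    have := hasDerivAt_partial_fst (hρD (t, x))
    simpa [hRdef, Function.uncurry] using this
  have hderiv_u : ∀ t x : ℝ, deriv (u t) x = fderiv ℝ U (t, x) (0, 1) :=
    fun t x => (hux t x).deriv
  have hderiv_ρ : ∀ t x : ℝ, deriv (ρ t) x = fderiv ℝ R (t, x) (0, 1) :=
    fun t x => (hρx t x).deriv
  -- second x-derivative of u
  have hdudef : ∀ t : ℝ, deriv (u t) = fun y => fderiv ℝ U (t, y) (0, 1) :=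
    fun t => funext fun y => hderiv_u t y
  have huxx : ∀ t x : ℝ, deriv (deriv (u t)) x
      = fderiv ℝ (fun p : ℝ × ℝ => fderiv ℝ U p (0, 1)) (t, x) (0, 1) := by
    intro t x
    rw [hdudef t]
    exact (hasDerivAt_partial_snd ((hdu1.differentiable one_ne_zero) (t, x))).deriv
  -- the flow line
  have hqx : ContDiff ℝ 1 (fun s : ℝ => q s x₀) :=
    hq.comp (contDiff_id.prodMk contDiff_const)
  have hP : ContDiff ℝ 1 (fun s : ℝ => ((s : ℝ), q s x₀)) := contDiff_id.prodMk hqx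
  have hq' : ∀ t ∈ Set.Ico (0 : ℝ) T, HasDerivAt (fun s => q s x₀) (u t (q t x₀)) t := by
    intro t ht
    have hd : DifferentiableAt ℝ (fun s => q s x₀) t := (hqx.differentiable one_ne_zero) t
    have := hd.hasDerivAt
    rwa [hode t ht x₀] at this
  -- b : second x-derivative of u along the flow, continuous
  set b : ℝ → ℝ := fun s =>
    fderiv ℝ (fun p : ℝ × ℝ => fderiv ℝ U p (0, 1)) (s, q s x₀) (0, 1) with hbdef
  have hbcont : Continuous b := by
    have h1 : Continuous (fderiv ℝ (fun p : ℝ × ℝ => fderiv ℝ U p (0, 1))) :=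
      hdu1.continuous_fderiv one_ne_zero
    exact ((h1.comp hP.continuous).clm_apply continuous_const)
  have hbzero : ∀ t ∈ Set.Ico (0 : ℝ) T, b t = 0 := by
    intro t₁ ht₁
    by_contra hb
    have hopen : IsOpen {s : ℝ | b s ≠ 0} := isOpen_ne_fun hbcont continuous_const
    obtain ⟨ε, hε, hball⟩ := Metric.isOpen_iff.1 hopen t₁ hb
    set m := min (t₁ + ε) T with hm
    have htm : t₁ < m := lt_min (by linarith) ht₁.2
    have hsub : Set.Ioo t₁ m ⊆ {s : ℝ | b s ≠ 0} := by
      intro s hs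
      apply hball
      rw [Metric.mem_ball, Real.dist_eq, abs_lt]
      constructor
      · linarith [hs.1]
      · have : s < t₁ + ε := lt_of_lt_of_le hs.2 (min_le_left _ _)
        linarith
    have hsub2 : Set.Ioo t₁ m ⊆ Set.Ico (0 : ℝ) T := by
      intro s hs
      exact ⟨le_of_lt (lt_of_le_of_lt ht₁.1 hs.1), lt_of_lt_of_le hs.2 (min_le_right _ _)⟩
    have hae : (volume.restrict (Set.Ico (0 : ℝ) T)) {s : ℝ | b s ≠ 0} = 0 := by
      have : ∀ᵐ s ∂(volume.restrict (Set.Ico (0 : ℝ) T)), b s = 0 := by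
        filter_upwards [hx₀] with s hs
        show fderiv ℝ (fun p : ℝ × ℝ => fderiv ℝ U p (0, 1)) (s, q s x₀) (0, 1) = 0
        rw [← huxx s (q s x₀)]
        exact hs
      exact this
    have hle : (volume.restrict (Set.Ico (0 : ℝ) T)) (Set.Ioo t₁ m) ≤ 0 := by
      rw [← hae]; exact measure_mono hsub
    have : (volume.restrict (Set.Ico (0 : ℝ) T)) (Set.Ioo t₁ m)
        = volume (Set.Ioo t₁ m) := by
      rw [Measure.restrict_apply measurableSet_Ioo,
        Set.inter_eq_left.2 hsub2]
    rw [this, Real.volume_Ioo] at hle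
    simp only [nonpos_iff_eq_zero, ENNReal.ofReal_eq_zero] at hle
    linarith
  -- symmetry of second derivatives of ρ
  have hsymm : ∀ p : ℝ × ℝ,
      fderiv ℝ (fun p : ℝ × ℝ => fderiv ℝ R p (1, 0)) p (0, 1)
        = fderiv ℝ (fun p : ℝ × ℝ => fderiv ℝ R p (0, 1)) p (1, 0) := by
    intro p
    have hD : DifferentiableAt ℝ (fderiv ℝ R) p := (hρ1.differentiable one_ne_zero) p
    rw [fderiv_fderiv_apply hD (0, 1) (1, 0), fderiv_fderiv_apply hD (1, 0) (0, 1)]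
    exact second_derivative_symmetric (fun y => (hρD y).hasFDerivAt) hD.hasFDerivAt _ _
  -- differentiating the transport equation in x
  have hzero : ∀ t ∈ Set.Ico (0 : ℝ) T, ∀ x : ℝ,
      fderiv ℝ (fun p : ℝ × ℝ => fderiv ℝ R p (1, 0)) (t, x) (0, 1)
        + (fderiv ℝ U (t, x) (0, 1) * fderiv ℝ R (t, x) (0, 1)
            + u t x * fderiv ℝ (fun p : ℝ × ℝ => fderiv ℝ R p (0, 1)) (t, x) (0, 1))
        + (2 * fderiv ℝ (fun p : ℝ × ℝ => fderiv ℝ U p (0, 1)) (t, x) (0, 1) * ρ t x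
            + 2 * fderiv ℝ U (t, x) (0, 1) * fderiv ℝ R (t, x) (0, 1)) = 0 := by
    intro t ht x
    set φ : ℝ → ℝ := fun y => fderiv ℝ R (t, y) (1, 0)
      + u t y * fderiv ℝ R (t, y) (0, 1)
      + 2 * fderiv ℝ U (t, y) (0, 1) * ρ t y with hφdef
    have hφ0 : φ = fun _ => (0 : ℝ) := by
      funext y
      rw [hφdef]
      simp only
      rw [← (hρt t y).deriv, ← hderiv_ρ, ← hderiv_u]
      exact htransport t ht y
    have h1 : HasDerivAt (fun y => fderiv ℝ R (t, y) (1, 0))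
        (fderiv ℝ (fun p : ℝ × ℝ => fderiv ℝ R p (1, 0)) (t, x) (0, 1)) x :=
      hasDerivAt_partial_snd ((hdtρ1.differentiable one_ne_zero) (t, x))
    have h2 : HasDerivAt (fun y => u t y * fderiv ℝ R (t, y) (0, 1))
        (fderiv ℝ U (t, x) (0, 1) * fderiv ℝ R (t, x) (0, 1)
          + u t x * fderiv ℝ (fun p : ℝ × ℝ => fderiv ℝ R p (0, 1)) (t, x) (0, 1)) x :=
      (hux t x).mul (hasDerivAt_partial_snd ((hdρ1.differentiable one_ne_zero) (t, x)))
    have h3 : HasDerivAt (fun y => 2 * fderiv ℝ U (t, y) (0, 1) * ρ t y)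
        (2 * fderiv ℝ (fun p : ℝ × ℝ => fderiv ℝ U p (0, 1)) (t, x) (0, 1) * ρ t x
          + 2 * fderiv ℝ U (t, x) (0, 1) * fderiv ℝ R (t, x) (0, 1)) x := by
      have := ((hasDerivAt_partial_snd ((hdu1.differentiable one_ne_zero) (t, x))).const_mul
        (2 : ℝ)).mul (hρx t x)
      exact this.congr_deriv (by ring)
    have htot : HasDerivAt φ
        (fderiv ℝ (fun p : ℝ × ℝ => fderiv ℝ R p (1, 0)) (t, x) (0, 1)
          + (fderiv ℝ U (t, x) (0, 1) * fderiv ℝ R (t, x) (0, 1)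
              + u t x * fderiv ℝ (fun p : ℝ × ℝ => fderiv ℝ R p (0, 1)) (t, x) (0, 1))
          + (2 * fderiv ℝ (fun p : ℝ × ℝ => fderiv ℝ U p (0, 1)) (t, x) (0, 1) * ρ t x
              + 2 * fderiv ℝ U (t, x) (0, 1) * fderiv ℝ R (t, x) (0, 1))) x :=
      (h1.add h2).add h3
    rw [hφ0] at htot
    exact htot.unique (hasDerivAt_const x 0)
  -- splitting vectors
  have hsplit : ∀ (M : (ℝ × ℝ) →L[ℝ] ℝ) (c : ℝ),
      M (1, c) = M (1, 0) + c * M (0, 1) := by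
    intro M c
    have hv : ((1 : ℝ), c) = ((1 : ℝ), (0 : ℝ)) + c • ((0 : ℝ), (1 : ℝ)) := by
      simp [Prod.ext_iff]
    rw [hv, map_add, M.map_smul, smul_eq_mul]
  -- derivative of F along the flow
  have hFt : ∀ t ∈ Set.Ico (0 : ℝ) T,
      HasDerivAt (fun s => fderiv ℝ R (s, q s x₀) (0, 1))
        (-3 * fderiv ℝ U (t, q t x₀) (0, 1) * fderiv ℝ R (t, q t x₀) (0, 1)
          - 2 * b t * ρ t (q t x₀)) t := by
    intro t ht
    have hPt : HasDerivAt (fun s : ℝ => ((s : ℝ), q s x₀)) ((1 : ℝ), u t (q t x₀)) t :=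
      (hasDerivAt_id t).prodMk (hq' t ht)
    have hFd : HasDerivAt (fun s => fderiv ℝ R (s, q s x₀) (0, 1))
        (fderiv ℝ (fun p : ℝ × ℝ => fderiv ℝ R p (0, 1)) (t, q t x₀) ((1 : ℝ), u t (q t x₀))) t :=
      HasFDerivAt.comp_hasDerivAt (l := fun p : ℝ × ℝ => fderiv ℝ R p (0, 1)) t
        (((hdρ1.differentiable one_ne_zero) (t, q t x₀)).hasFDerivAt) hPt
    have heq : fderiv ℝ (fun p : ℝ × ℝ => fderiv ℝ R p (0, 1)) (t, q t x₀) ((1 : ℝ), u t (q t x₀))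
        = -3 * fderiv ℝ U (t, q t x₀) (0, 1) * fderiv ℝ R (t, q t x₀) (0, 1)
          - 2 * b t * ρ t (q t x₀) := by
      rw [hsplit, ← hsymm (t, q t x₀)]
      have h0 := hzero t ht (q t x₀)
      rw [hbdef]
      simp only
      linarith
    rw [heq] at hFd
    exact hFd
  -- the integrating factor argument
  intro t ht
  rw [hderiv_ρ t (q t x₀), hderiv_ρ 0 x₀]
  have hinteq : (∫ s in (0:ℝ)..t, deriv (u s) (q s x₀))
      = ∫ s in (0:ℝ)..t, fderiv ℝ U (s, q s x₀) (0, 1) := by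
    apply intervalIntegral.integral_congr
    intro s _
    exact hderiv_u s _
  rw [hinteq]
  have hacont : Continuous (fun s : ℝ => fderiv ℝ U (s, q s x₀) (0, 1)) := by
    have := hdu1.continuous.comp hP.continuous
    exact this
  have hA : ∀ r : ℝ, HasDerivAt (fun τ : ℝ => ∫ s in (0:ℝ)..τ, fderiv ℝ U (s, q s x₀) (0, 1))
      (fderiv ℝ U (r, q r x₀) (0, 1)) r := fun r =>
    intervalIntegral.integral_hasDerivAt_right (hacont.intervalIntegrable _ _)
      (hacont.stronglyMeasurableAtFilter _ _) hacont.continuousAt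
  have hAcont : Continuous (fun τ : ℝ => ∫ s in (0:ℝ)..τ, fderiv ℝ U (s, q s x₀) (0, 1)) :=
    continuous_iff_continuousAt.2 fun r => (hA r).continuousAt
  have hFcont : Continuous (fun s : ℝ => fderiv ℝ R (s, q s x₀) (0, 1)) := by
    have := hdρ1.continuous.comp hP.continuous
    exact this
  have hGcont : Continuous (fun s : ℝ => fderiv ℝ R (s, q s x₀) (0, 1)
      * Real.exp (3 * ∫ σ in (0:ℝ)..s, fderiv ℝ U (σ, q σ x₀) (0, 1))) :=
    hFcont.mul ((continuous_const.mul hAcont).rexp)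
  have hG : ∀ s ∈ Set.Ico (0:ℝ) T, HasDerivAt (fun r : ℝ => fderiv ℝ R (r, q r x₀) (0, 1)
      * Real.exp (3 * ∫ σ in (0:ℝ)..r, fderiv ℝ U (σ, q σ x₀) (0, 1))) 0 s := by
    intro s hs
    have h1 := hFt s hs
    have h2 : HasDerivAt (fun r : ℝ =>
        Real.exp (3 * ∫ σ in (0:ℝ)..r, fderiv ℝ U (σ, q σ x₀) (0, 1)))
        (Real.exp (3 * ∫ σ in (0:ℝ)..s, fderiv ℝ U (σ, q σ x₀) (0, 1))
          * (3 * fderiv ℝ U (s, q s x₀) (0, 1))) s :=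
      ((hA s).const_mul (3:ℝ)).exp
    have h3 := h1.mul h2
    exact h3.congr_deriv (by rw [hbzero s hs]; ring)
  have key := constant_of_has_deriv_right_zero (a := (0:ℝ)) (b := t)
    (hGcont.continuousOn)
    (fun x hx => (hG x ⟨hx.1, hx.2.trans ht.2⟩).hasDerivWithinAt)
    t (Set.right_mem_Icc.2 ht.1)
  simp only [intervalIntegral.integral_same, mul_zero, Real.exp_zero, mul_one, hq0 x₀] at key
  rw [← key]
  set At := ∫ s in (0:ℝ)..t, fderiv ℝ U (s, q s x₀) (0, 1) with hAt
  rw [mul_assoc, ← Real.exp_add, show 3 * At + -3 * At = 0 by ring, Real.exp_zero, mul_one]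
end

section
/- Let T > 0, K > 0 and let m : [0,T) → ℝ be differentiable with m'(t) ≤ −m(t)² + K² for all t ∈ [0,T). If m(0) < −K, then for all t ∈ [0,T) one has m(t) ≤ m(0) < −K and ( (m(0)+K)/(m(0)−K) )·e^{2Kt} − 1 ≤ 2K / ( m(t) − K ) ≤ 0. -/
open Real

/-- Riccati comparison inequality: if `m : [0,T) → ℝ` is differentiable with
`m' ≤ −m² + K²` and `m(0) < −K`, then `m(t) ≤ m(0) < −K` and
`((m(0)+K)/(m(0)−K)) e^{2Kt} − 1 ≤ 2K/(m(t)−K) ≤ 0` for all `t ∈ [0,T)`. -/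
theorem stmt_16 (T K : ℝ) (hT : 0 < T) (hK : 0 < K)
    (m m' : ℝ → ℝ)
    (hderiv : ∀ t ∈ Set.Ico (0 : ℝ) T, HasDerivWithinAt m (m' t) (Set.Ico (0 : ℝ) T) t)
    (hineq : ∀ t ∈ Set.Ico (0 : ℝ) T, m' t ≤ -(m t) ^ 2 + K ^ 2)
    (h0 : m 0 < -K) :
    ∀ t ∈ Set.Ico (0 : ℝ) T,
      m t ≤ m 0 ∧
      ((m 0 + K) / (m 0 - K)) * Real.exp (2 * K * t) - 1 ≤ 2 * K / (m t - K) ∧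
      2 * K / (m t - K) ≤ 0 := by
  set I : Set ℝ := Set.Ico (0 : ℝ) T with hI
  have hcont : ContinuousOn m I := fun t ht => (hderiv t ht).continuousWithinAt
  -- Step B: m t < -K on I
  have hlt : ∀ t ∈ I, m t < -K := by
    by_contra hcon
    push_neg at hcon
    obtain ⟨t', ht', hmt'⟩ := hcon
    set B : Set ℝ := Set.Icc 0 t' ∩ m ⁻¹' Set.Ici (-K) with hB
    have hsubI : Set.Icc (0:ℝ) t' ⊆ I := Set.Icc_subset_Ico_right ht'.2
    have hBclosed : IsClosed B :=
      (hcont.mono hsubI).preimage_isClosed_of_isClosed isClosed_Icc isClosed_Ici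
    have hBne : B.Nonempty := ⟨t', ⟨ht'.1, le_refl _⟩, hmt'⟩
    have hBbdd : BddBelow B := ⟨0, fun x hx => hx.1.1⟩
    set t₀ := sInf B with ht₀
    have ht₀B : t₀ ∈ B := hBclosed.csInf_mem hBne hBbdd
    have ht₀I : t₀ ∈ I := hsubI ht₀B.1
    have hmt₀ : -K ≤ m t₀ := ht₀B.2
    have ht₀pos : 0 < t₀ := by
      rcases (ht₀B.1.1).lt_or_eq with h | h
      · exact h
      · exfalso; rw [show t₀ = 0 from h.symm] at hmt₀; linarith
    -- on [0, t₀), m s < -K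
    have hless : ∀ s ∈ Set.Ico (0:ℝ) t₀, m s < -K := by
      intro s hs
      by_contra hcs
      push_neg at hcs
      have hsB : s ∈ B := ⟨⟨hs.1, le_trans hs.2.le ht₀B.1.2⟩, hcs⟩
      exact absurd (csInf_le hBbdd hsB) (not_le.2 hs.2)
    -- m is antitone on Icc 0 t₀
    have hsub0 : Set.Icc (0:ℝ) t₀ ⊆ I := Set.Icc_subset_Ico_right ht₀I.2
    have hanti : AntitoneOn m (Set.Icc 0 t₀) := by
      apply antitoneOn_of_deriv_nonpos (convex_Icc 0 t₀) (hcont.mono hsub0)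
      · intro s hs
        rw [interior_Icc] at hs
        have hsI : s ∈ I := hsub0 ⟨hs.1.le, hs.2.le⟩
        exact ((hderiv s hsI).hasDerivAt
          (Ico_mem_nhds hs.1 (lt_of_lt_of_le hs.2 ht₀I.2.le))).differentiableAt.differentiableWithinAt
      · intro s hs
        rw [interior_Icc] at hs
        have hsI : s ∈ I := hsub0 ⟨hs.1.le, hs.2.le⟩
        have hd := (hderiv s hsI).hasDerivAt (Ico_mem_nhds hs.1 (lt_of_lt_of_le hs.2 ht₀I.2.le))
        rw [hd.deriv]
        have h1 := hineq s hsI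
        have h2 := hless s ⟨hs.1.le, hs.2⟩
        nlinarith
    have := hanti (Set.left_mem_Icc.2 ht₀pos.le) (Set.right_mem_Icc.2 ht₀pos.le) ht₀pos.le
    linarith
  -- derivative nonpositive on interior of I
  have hIint : interior I = Set.Ioo 0 T := interior_Ico
  have hderivAt : ∀ s ∈ Set.Ioo (0:ℝ) T, HasDerivAt m (m' s) s := fun s hs =>
    (hderiv s ⟨hs.1.le, hs.2⟩).hasDerivAt (Ico_mem_nhds hs.1 hs.2)
  -- Step C: m antitone on I
  have hantiI : AntitoneOn m I := by
    apply antitoneOn_of_deriv_nonpos (convex_Ico 0 T) hcont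
    · intro s hs; rw [hIint] at hs
      exact (hderivAt s hs).differentiableAt.differentiableWithinAt
    · intro s hs; rw [hIint] at hs
      rw [(hderivAt s hs).deriv]
      have h1 := hineq s ⟨hs.1.le, hs.2⟩
      have h2 := hlt s ⟨hs.1.le, hs.2⟩
      nlinarith
  have h0I : (0:ℝ) ∈ I := ⟨le_refl 0, hT⟩
  -- Step D : g t = exp(-(2K t)) * (m t + K)/(m t - K) is monotone
  set g : ℝ → ℝ := fun t => Real.exp (-(2 * K * t)) * ((m t + K) / (m t - K)) with hg
  have hne : ∀ t ∈ I, m t - K ≠ 0 := fun t ht => by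
    have := hlt t ht; intro h; nlinarith
  have hgderiv : ∀ t ∈ I, HasDerivWithinAt g
      (Real.exp (-(2 * K * t)) * (-(2 * K)) * ((m t + K) / (m t - K)) +
        Real.exp (-(2 * K * t)) *
          ((m' t * (m t - K) - (m t + K) * m' t) / (m t - K) ^ 2)) I t := by
    intro t ht
    have he : HasDerivWithinAt (fun s => Real.exp (-(2 * K * s)))
        (Real.exp (-(2 * K * t)) * (-(2 * K))) I t := by
      have : HasDerivAt (fun s : ℝ => -(2 * K * s)) (-(2 * K)) t := by
        simpa [Pi.neg_def] using ((hasDerivAt_id t).const_mul (2 * K)).neg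
      exact (this.exp).hasDerivWithinAt
    have hm := hderiv t ht
    have hnum : HasDerivWithinAt (fun s => m s + K) (m' t) I t := hm.add_const K
    have hden : HasDerivWithinAt (fun s => m s - K) (m' t) I t := hm.sub_const K
    have hdiv := hnum.div hden (hne t ht)
    simpa [hg, Pi.mul_def, Pi.div_def] using he.mul hdiv
  have hgmono : MonotoneOn g I := by
    apply monotoneOn_of_deriv_nonneg (convex_Ico 0 T)
      (fun t ht => (hgderiv t ht).continuousWithinAt)
    · intro s hs; rw [hIint] at hs
      have hsI : s ∈ I := ⟨hs.1.le, hs.2⟩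
      exact ((hgderiv s hsI).hasDerivAt
        (Ico_mem_nhds hs.1 hs.2)).differentiableAt.differentiableWithinAt
    · intro s hs; rw [hIint] at hs
      have hsI : s ∈ I := ⟨hs.1.le, hs.2⟩
      rw [((hgderiv s hsI).hasDerivAt (Ico_mem_nhds hs.1 hs.2)).deriv]
      have h1 := hineq s hsI
      have h2 := hlt s hsI
      have hne' := hne s hsI
      have hepos := Real.exp_pos (-(2 * K * s))
      have key : Real.exp (-(2 * K * s)) * (-(2 * K)) * ((m s + K) / (m s - K)) +
          Real.exp (-(2 * K * s)) *
            ((m' s * (m s - K) - (m s + K) * m' s) / (m s - K) ^ 2) =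
          Real.exp (-(2 * K * s)) * (2 * K) * (-(m s) ^ 2 + K ^ 2 - m' s) / (m s - K) ^ 2 := by
        field_simp
        ring
      rw [key]
      apply div_nonneg _ (sq_nonneg _)
      have : 0 ≤ -(m s) ^ 2 + K ^ 2 - m' s + (2 * K ^ 2 - 2 * K ^ 2) := by nlinarith
      nlinarith [mul_pos hepos (mul_pos two_pos hK)]
  intro t ht
  have hmt := hlt t ht
  have hm0 : m 0 < -K := h0
  have hnet := hne t ht
  have hne0 := hne 0 h0I
  refine ⟨hantiI h0I ht ht.1, ?_, ?_⟩
  · -- main inequality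
    have hg0 : g 0 = (m 0 + K) / (m 0 - K) := by simp [hg]
    have hmono := hgmono h0I ht ht.1
    rw [hg0] at hmono
    -- multiply by exp(2Kt)
    have hexp : Real.exp (-(2 * K * t)) * Real.exp (2 * K * t) = 1 := by
      rw [← Real.exp_add]; ring_nf; exact Real.exp_zero
    have hepos : (0:ℝ) < Real.exp (2 * K * t) := Real.exp_pos _
    have h1 : (m 0 + K) / (m 0 - K) * Real.exp (2 * K * t) ≤ (m t + K) / (m t - K) := by
      have := mul_le_mul_of_nonneg_right hmono hepos.le
      calc (m 0 + K) / (m 0 - K) * Real.exp (2 * K * t)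
          ≤ g t * Real.exp (2 * K * t) := this
        _ = (m t + K) / (m t - K) := by
            rw [hg]; simp only
            rw [mul_comm (Real.exp (-(2 * K * t))) _, mul_assoc, hexp, mul_one]
    have h2 : (m t + K) / (m t - K) - 1 = 2 * K / (m t - K) := by
      field_simp
      ring
    linarith [h2 ▸ sub_le_sub_right h1 1]
  · exact div_nonpos_of_nonneg_of_nonpos (by linarith) (by linarith)
end

section
/- Let T > 0 be finite, K ≥ 0, and let m : [0,T) → ℝ be differentiable with |m'(t) + m(t)²| ≤ K for all t ∈ [0,T), and suppose m(t) → −∞ as t → T⁻. Then lim_{t → T⁻} m(t)·(T − t) = −1. -/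
open Real Filter

/-- Exact blow-up rate: if `m : [0,T) → ℝ` is differentiable with
`|m' + m²| ≤ K` and `m(t) → −∞` as `t → T⁻`, then `m(t)·(T − t) → −1`
as `t → T⁻`. -/
theorem stmt_19 (T K : ℝ) (hT : 0 < T) (hK : 0 ≤ K)
    (m m' : ℝ → ℝ)
    (hderiv : ∀ t ∈ Set.Ico (0 : ℝ) T, HasDerivWithinAt m (m' t) (Set.Ico (0 : ℝ) T) t)
    (hbound : ∀ t ∈ Set.Ico (0 : ℝ) T, |m' t + (m t) ^ 2| ≤ K)
    (hblow : Tendsto m (nhdsWithin T (Set.Iio T)) atBot) :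
    Tendsto (fun t => m t * (T - t)) (nhdsWithin T (Set.Iio T)) (nhds (-1)) := by
  -- key estimate: for every ε > 0, eventually |1/m(t) + (T - t)| ≤ ε (T - t)
  have key : ∀ ε : ℝ, 0 < ε → ∀ᶠ t in nhdsWithin T (Set.Iio T),
      |(m t)⁻¹ + (T - t)| ≤ ε * (T - t) := by
    intro ε hε
    set M : ℝ := 1 + Real.sqrt (K / ε) with hMdef
    have hM1 : (1 : ℝ) ≤ M := le_add_of_nonneg_right (Real.sqrt_nonneg _)
    have hM0 : (0 : ℝ) < M := lt_of_lt_of_le one_pos hM1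
    have hKM : K ≤ ε * M ^ 2 := by
      have h1 : Real.sqrt (K / ε) ^ 2 = K / ε := Real.sq_sqrt (by positivity)
      have h2 : Real.sqrt (K / ε) ≤ M := le_add_of_nonneg_left one_pos.le
      have h3 : K / ε ≤ M ^ 2 := by
        nlinarith [Real.sqrt_nonneg (K / ε)]
      calc K = ε * (K / ε) := by field_simp
        _ ≤ ε * M ^ 2 := by nlinarith
    -- find a < T with m ≤ -M on Ioo a T
    have hev : ∀ᶠ t in nhdsWithin T (Set.Iio T), m t ≤ -M :=
      hblow.eventually (eventually_le_atBot (-M))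
    obtain ⟨a, haT, hsub⟩ := mem_nhdsLT_iff_exists_Ioo_subset.mp hev
    have haT' : a < T := haT
    set a' : ℝ := max a 0 with ha'def
    have ha'T : a' < T := max_lt haT' hT
    set t₀ : ℝ := (a' + T) / 2 with ht₀def
    have ht₀1 : a' < t₀ := by simp only [ht₀def]; linarith
    have ht₀2 : t₀ < T := by simp only [ht₀def]; linarith
    set S : Set ℝ := Set.Ico t₀ T with hSdef
    have hS0 : S ⊆ Set.Ico 0 T := by
      intro t ht
      exact ⟨le_trans (le_trans (le_max_right a 0) ht₀1.le) ht.1, ht.2⟩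
    have hSa : ∀ t ∈ S, m t ≤ -M := by
      intro t ht
      exact hsub ⟨lt_of_le_of_lt (le_max_left a 0) (lt_of_lt_of_le ht₀1 ht.1), ht.2⟩
    have hmne : ∀ t ∈ S, m t ≠ 0 := by
      intro t ht
      have := hSa t ht
      intro h; rw [h] at this; linarith
    have hmsq : ∀ t ∈ S, M ^ 2 ≤ (m t) ^ 2 := by
      intro t ht
      nlinarith [hSa t ht]
    -- the auxiliary function g t = 1/m(t) - t
    set g : ℝ → ℝ := fun t => (m t)⁻¹ - t with hgdef
    have hgd : ∀ t ∈ S, HasDerivWithinAt g (-(m' t) / (m t) ^ 2 - 1) S t := by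
      intro t ht
      exact (((hderiv t (hS0 ht)).mono hS0).inv (hmne t ht)).sub
        (hasDerivWithinAt_id t S)
    have hgb : ∀ t ∈ S, ‖-(m' t) / (m t) ^ 2 - 1‖ ≤ ε := by
      intro t ht
      have hmt : m t ≠ 0 := hmne t ht
      have hmt2 : (0 : ℝ) < (m t) ^ 2 := by positivity
      have heq : -(m' t) / (m t) ^ 2 - 1 = -((m' t + (m t) ^ 2) / (m t) ^ 2) := by
        field_simp
        ring
      rw [Real.norm_eq_abs, heq, abs_neg, abs_div, abs_of_pos hmt2,
        div_le_iff₀ hmt2]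
      have h1 := hbound t (hS0 ht)
      have h2 := hmsq t ht
      nlinarith
    have hconv : Convex ℝ S := convex_Ico _ _
    have hmvt : ∀ x ∈ S, ∀ y ∈ S, ‖g y - g x‖ ≤ ε * ‖y - x‖ :=
      fun x hx y hy => hconv.norm_image_sub_le_of_norm_hasDerivWithin_le hgd hgb hx hy
    -- limit of g at T⁻
    have hinv0 : Tendsto (fun t => (m t)⁻¹) (nhdsWithin T (Set.Iio T)) (nhds 0) := by
      have h1 : Tendsto (fun t => -m t) (nhdsWithin T (Set.Iio T)) atTop :=
        tendsto_neg_atBot_atTop.comp hblow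
      have h2 := (tendsto_inv_atTop_zero.comp h1).neg
      simpa [inv_neg] using h2
    have hid : Tendsto (fun t : ℝ => t) (nhdsWithin T (Set.Iio T)) (nhds T) :=
      (continuous_id.tendsto T).mono_left nhdsWithin_le_nhds
    have hgl : Tendsto g (nhdsWithin T (Set.Iio T)) (nhds (-T)) := by
      have := hinv0.sub hid
      simpa using this
    -- for each fixed t ∈ S, pass to the limit in the MVT inequality
    have hfinal : ∀ t ∈ S, |(m t)⁻¹ + (T - t)| ≤ ε * (T - t) := by
      intro t ht
      have hSev : ∀ᶠ s in nhdsWithin T (Set.Iio T), s ∈ S := by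
        apply mem_nhdsLT_iff_exists_Ioo_subset.mpr
        exact ⟨t₀, ht₀2, fun s hs => ⟨hs.1.le, hs.2⟩⟩
      have hle : ∀ᶠ s in nhdsWithin T (Set.Iio T), ‖g s - g t‖ ≤ ε * ‖s - t‖ :=
        hSev.mono (fun s hs => hmvt t ht s hs)
      have h1 : Tendsto (fun s => ‖g s - g t‖) (nhdsWithin T (Set.Iio T))
          (nhds ‖(-T) - g t‖) := (hgl.sub tendsto_const_nhds).norm
      have h2 : Tendsto (fun s => ε * ‖s - t‖) (nhdsWithin T (Set.Iio T))
          (nhds (ε * ‖T - t‖)) := ((hid.sub tendsto_const_nhds).norm).const_mul ε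
      have h3 : ‖(-T) - g t‖ ≤ ε * ‖T - t‖ := le_of_tendsto_of_tendsto h1 h2 hle
      have htT : t < T := ht.2
      have heq1 : (-T) - g t = -((m t)⁻¹ + (T - t)) := by
        simp only [hgdef]; ring
      rw [heq1, Real.norm_eq_abs, Real.norm_eq_abs, abs_neg,
        abs_of_pos (by linarith : (0:ℝ) < T - t)] at h3
      exact h3
    apply mem_nhdsLT_iff_exists_Ioo_subset.mpr
    exact ⟨t₀, ht₀2, fun s hs => hfinal s ⟨hs.1.le, hs.2⟩⟩
  -- hence 1/m(t) / (T - t) → -1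
  have htends : Tendsto (fun t => (m t)⁻¹ / (T - t)) (nhdsWithin T (Set.Iio T))
      (nhds (-1)) := by
    rw [Metric.tendsto_nhds]
    intro δ hδ
    have hk := key (δ / 2) (by linarith)
    have hlt : ∀ᶠ t in nhdsWithin T (Set.Iio T), t < T :=
      eventually_mem_nhdsWithin
    filter_upwards [hk, hlt] with t hk1 htT
    have hTt : (0 : ℝ) < T - t := by linarith
    have heq : (m t)⁻¹ / (T - t) - (-1) = ((m t)⁻¹ + (T - t)) / (T - t) := by
      have hgen : ∀ b : ℝ, b / (T - t) - (-1) = (b + (T - t)) / (T - t) := by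
        intro b; field_simp; ring
      exact hgen _
    rw [Real.dist_eq, heq, abs_div, abs_of_pos hTt, div_lt_iff₀ hTt]
    calc |(m t)⁻¹ + (T - t)| ≤ δ / 2 * (T - t) := hk1
      _ < δ * (T - t) := by nlinarith
  -- invert
  have hinv : Tendsto (fun t => ((m t)⁻¹ / (T - t))⁻¹) (nhdsWithin T (Set.Iio T))
      (nhds ((-1 : ℝ)⁻¹)) := htends.inv₀ (by norm_num)
  rw [show ((-1 : ℝ)⁻¹) = -1 by norm_num] at hinv
  apply hinv.congr'
  have hev : ∀ᶠ t in nhdsWithin T (Set.Iio T), m t ≤ -1 :=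
    hblow.eventually (eventually_le_atBot (-1))
  have hlt : ∀ᶠ t in nhdsWithin T (Set.Iio T), t < T := eventually_mem_nhdsWithin
  filter_upwards [hev, hlt] with t hm1 htT
  have hmt : m t ≠ 0 := by intro h; rw [h] at hm1; linarith
  have hTt : T - t ≠ 0 := by intro h; linarith [htT, sub_eq_zero.mp h]
  field_simp
end
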